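/- arXiv:1903.00867 — 3 statements merged into one kernel-verified Lean document; each statement's English description precedes it below -/
import Mathlib

section
/- Let n ≥ 1, let a, b, c, d ∈ (−1,1) and q ∈ (−1,1) with q ≠ 0. Suppose π > ξ_1 > ξ_2 > … > ξ_n > 0 are real numbers such that, with p : ℂ → ℂ defined by p(z) = ∏_{j=1}^n (z − cos ξ_j), the q-difference equation A(ξ)·( p((q e^{iξ} + q^{−1}e^{−iξ})/2) − p(cos ξ) ) + A(−ξ)·( p((q e^{−iξ} + q^{−1}e^{iξ})/2) − p(cos ξ) ) = E_n · p(cos ξ) holds for every real ξ with e^{2iξ} ≠ 1, where A(ξ) = (1−a e^{iξ})(1−b e^{iξ})(1−c e^{iξ})(1−d e^{iξ}) / ((1−e^{2iξ})(1−q e^{2iξ})) and E_n = q^{−n}(1−q^n)(1−abcd q^{n−1}). Then for all 1 ≤ j ≤ n one has π(n+1−j)/k₋ ≤ ξ_j ≤ π(n+1−j)/k₊, and for all 1 ≤ j < j′ ≤ n one has π(j′−j)/k₋ ≤ ξ_j − ξ_{j′} ≤ π(j′−j)/k₊, where k₊ and k₋ are defined as k_± = (n−1)((1−|q|)/(1+|q|))^{±1}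 + (1/2)( ((1−|a|)/(1+|a|))^{±1} + ((1−|b|)/(1+|b|))^{±1} + ((1−|c|)/(1+|c|))^{±1} + ((1−|d|)/(1+|d|))^{±1} ). -/
open Real Finset

noncomputable def awPhi (r θ : ℝ) : ℝ := Real.arctan (-(r * Real.sin θ) / (1 - r * Real.cos θ))
noncomputable def awR (r θ : ℝ) : ℝ := Real.sqrt (1 - 2*r*Real.cos θ + r^2)

lemma aw_den_pos {r : ℝ} (hr : |r| < 1) (θ : ℝ) : 0 < 1 - r * Real.cos θ := by
  have h1 := abs_lt.1 hr
  have h2 : |r * Real.cos θ| ≤ |r| := by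
    rw [abs_mul]
    nlinarith [abs_nonneg r, abs_le.2 ⟨Real.neg_one_le_cos θ, Real.cos_le_one θ⟩, abs_nonneg (Real.cos θ)]
  have := abs_lt.1 (lt_of_le_of_lt h2 hr)
  linarith [this.2]

lemma aw_quad_pos {r : ℝ} (hr : |r| < 1) (θ : ℝ) : 0 < 1 - 2*r*Real.cos θ + r^2 := by
  have h2 := abs_lt.1 hr
  have hc := Real.neg_one_le_cos θ
  have hc' := Real.cos_le_one θ
  rcases abs_cases r with ⟨h, _⟩ | ⟨h, _⟩ <;> nlinarith

lemma awR_pos {r : ℝ} (hr : |r| < 1) (θ : ℝ) : 0 < awR r θ :=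
  Real.sqrt_pos.2 (aw_quad_pos hr θ)

lemma awR_even (r θ : ℝ) : awR r (-θ) = awR r θ := by simp [awR]

lemma awPhi_neg (r θ : ℝ) : awPhi r (-θ) = -awPhi r θ := by
  simp [awPhi, ← Real.arctan_neg, neg_div]

lemma awPhi_zero (r : ℝ) : awPhi r 0 = 0 := by simp [awPhi]

lemma awPhi_pi (r : ℝ) : awPhi r π = 0 := by simp [awPhi]

lemma awPhi_pi_add (r x : ℝ) : awPhi r (π + x) = - awPhi r (π - x) := by
  simp [awPhi, Real.sin_pi_sub, Real.cos_pi_sub, Real.sin_add, Real.cos_add, ← Real.arctan_neg,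
    neg_div]

-- polar representation
lemma aw_polar (x y : ℝ) (hx : 0 < x) :
    (x:ℂ) + (y:ℂ)*Complex.I = ((Real.sqrt (x^2+y^2) : ℝ) : ℂ) * Complex.exp (Complex.I * ((Real.arctan (y/x) : ℝ) : ℂ)) := by
  have h1 : Complex.exp (Complex.I * ((Real.arctan (y/x) : ℝ) : ℂ))
      = ((Real.cos (Real.arctan (y/x)) : ℝ) : ℂ) + ((Real.sin (Real.arctan (y/x)) : ℝ) : ℂ) * Complex.I := by
    rw [mul_comm, Complex.exp_mul_I]
    push_cast [Complex.ofReal_cos, Complex.ofReal_sin]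
    simp [Complex.cos_ofReal_re, Complex.ofReal_cos, Complex.ofReal_sin]
  rw [h1, Real.cos_arctan, Real.sin_arctan]
  have hx' : (0:ℝ) < Real.sqrt (1 + (y/x)^2) := Real.sqrt_pos.2 (by positivity)
  have hkey : Real.sqrt (x^2 + y^2) = x * Real.sqrt (1 + (y/x)^2) := by
    rw [← Real.sqrt_sq hx.le, ← Real.sqrt_mul (by positivity)]
    congr 1
    field_simp
    exact Real.sq_sqrt (sq_nonneg x)
  rw [hkey]
  have : (x : ℂ) ≠ 0 := by exact_mod_cast hx.ne'
  have h2 : ((Real.sqrt (1 + (y/x)^2) : ℝ) : ℂ) ≠ 0 := by exact_mod_cast hx'.ne'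
  have h3 : ((Real.sqrt (x^2+y^2) : ℝ) : ℂ) ≠ 0 := by
    have : (0:ℝ) < Real.sqrt (x^2+y^2) := Real.sqrt_pos.2 (by positivity)
    exact_mod_cast this.ne'
  push_cast
  field_simp
  have h4 : ((Real.sqrt ((x^2+y^2)/x^2) : ℝ) : ℂ) ≠ 0 := by
    have : (0:ℝ) < Real.sqrt ((x^2+y^2)/x^2) := Real.sqrt_pos.2 (by positivity)
    exact_mod_cast this.ne'
  rw [mul_div_assoc, div_self h4, mul_one]

lemma aw_rep {r : ℝ} (hr : |r| < 1) (θ : ℝ) :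
    (1:ℂ) - (r:ℂ) * Complex.exp (Complex.I * (θ:ℂ)) = ((awR r θ : ℝ) : ℂ) * Complex.exp (Complex.I * ((awPhi r θ : ℝ) : ℂ)) := by
  have h1 : Complex.exp (Complex.I * (θ:ℂ)) = ((Real.cos θ : ℝ):ℂ) + ((Real.sin θ : ℝ):ℂ) * Complex.I := by
    rw [mul_comm, Complex.exp_mul_I]
    push_cast [Complex.ofReal_cos, Complex.ofReal_sin]
    simp [Complex.ofReal_cos, Complex.ofReal_sin]
  have hx : 0 < 1 - r * Real.cos θ := aw_den_pos hr θ
  have h2 := aw_polar (1 - r * Real.cos θ) (-(r * Real.sin θ)) hx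
  have hsq : (1 - r*Real.cos θ)^2 + (-(r*Real.sin θ))^2 = 1 - 2*r*Real.cos θ + r^2 := by
    have := Real.sin_sq_add_cos_sq θ
    nlinarith [this]
  rw [hsq] at h2
  rw [awPhi, awR]
  have h3 : (1:ℂ) - (r:ℂ) * Complex.exp (Complex.I * (θ:ℂ))
      = ((1 - r*Real.cos θ : ℝ):ℂ) + ((-(r*Real.sin θ) : ℝ):ℂ)*Complex.I := by
    rw [h1]; push_cast; ring
  rw [h3, h2]

lemma awPhi_hasDeriv {r : ℝ} (hr : |r| < 1) (θ : ℝ) :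
    HasDerivAt (awPhi r) ((r^2 - r*Real.cos θ)/(1 - 2*r*Real.cos θ + r^2)) θ := by
  have hw : (1 - r * Real.cos θ) ≠ 0 := (aw_den_pos hr θ).ne'
  have hu : HasDerivAt (fun t => -(r * Real.sin t) / (1 - r * Real.cos t))
      ((-(r * Real.cos θ) * (1 - r * Real.cos θ) - (-(r * Real.sin θ)) * (r * Real.sin θ)) / (1 - r * Real.cos θ)^2) θ := by
    have h1 : HasDerivAt (fun t => -(r * Real.sin t)) (-(r * Real.cos θ)) θ := by
      exact ((Real.hasDerivAt_sin θ).const_mul r).neg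
    have h2 : HasDerivAt (fun t => 1 - r * Real.cos t) (r * Real.sin θ) θ := by
      have := ((Real.hasDerivAt_cos θ).const_mul r).const_sub 1
      simpa using this
    exact h1.div h2 hw
  have := (Real.hasDerivAt_arctan (-(r * Real.sin θ) / (1 - r * Real.cos θ))).comp θ hu
  refine this.congr_deriv ?_
  symm
  have hD := aw_quad_pos hr θ
  have hs := Real.sin_sq_add_cos_sq θ
  have e1 : 1 + (-(r*Real.sin θ)/(1-r*Real.cos θ))^2 = (1-2*r*Real.cos θ+r^2)/((1-r*Real.cos θ)^2) := by
    field_simp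
    linear_combination r^2*hs
  rw [e1, one_div_div]
  rw [div_mul_div_comm]
  rw [div_eq_div_iff hD.ne' (by positivity)]
  linear_combination (-((1-2*r*Real.cos θ+r^2)*(1-r*Real.cos θ)^2*r^2))*hs

lemma awPhi_deriv_bounds {r : ℝ} (hr : |r| < 1) (θ : ℝ) :
    -(|r|/(1-|r|)) ≤ (r^2 - r*Real.cos θ)/(1 - 2*r*Real.cos θ + r^2) ∧
    (r^2 - r*Real.cos θ)/(1 - 2*r*Real.cos θ + r^2) ≤ |r|/(1+|r|) := by
  have hD := aw_quad_pos hr θ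
  have hc := Real.neg_one_le_cos θ
  have hc' := Real.cos_le_one θ
  have h1 : (0:ℝ) < 1 - |r| := by linarith [hr]
  have h2 : (0:ℝ) < 1 + |r| := by positivity
  constructor
  · rw [neg_le, ← neg_div, div_le_div_iff₀ hD h1]
    rcases abs_cases r with ⟨h, h0⟩ | ⟨h, h0⟩
    · nlinarith [mul_nonneg (mul_nonneg h0 (by linarith : (0:ℝ) ≤ 1+r)) (by linarith : (0:ℝ) ≤ 1 - Real.cos θ)]
    · nlinarith [mul_nonneg (mul_nonneg (by linarith : (0:ℝ) ≤ -r) (by linarith : (0:ℝ) ≤ 1-r)) (by linarith : (0:ℝ) ≤ 1 + Real.cos θ)]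
  · rw [div_le_div_iff₀ hD h2]
    rcases abs_cases r with ⟨h, h0⟩ | ⟨h, h0⟩
    · nlinarith [mul_nonneg (mul_nonneg h0 (by linarith : (0:ℝ) ≤ 1-r)) (by linarith : (0:ℝ) ≤ 1 + Real.cos θ)]
    · nlinarith [mul_nonneg (mul_nonneg (by linarith : (0:ℝ) ≤ -r) (by linarith : (0:ℝ) ≤ 1+r)) (by linarith : (0:ℝ) ≤ 1 - Real.cos θ)]

/-- MVT increment bounds. -/
lemma aw_incr {f f' : ℝ → ℝ} (hf : ∀ x, HasDerivAt f (f' x) x) {lo hi : ℝ}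
    (hlo : ∀ x, lo ≤ f' x) (hhi : ∀ x, f' x ≤ hi) {α β : ℝ} (hab : α ≤ β) :
    lo*(β-α) ≤ f β - f α ∧ f β - f α ≤ hi*(β-α) := by
  have hdiff : Differentiable ℝ f := fun x => (hf x).differentiableAt
  have hderiv : ∀ x, deriv f x = f' x := fun x => (hf x).deriv
  constructor
  · exact mul_sub_le_image_sub_of_le_deriv hdiff (fun x => (hderiv x) ▸ hlo x) hab
  · exact image_sub_le_mul_sub_of_deriv_le hdiff (fun x => (hderiv x) ▸ hhi x) hab

lemma aw_one_abs_pos {r : ℝ} (hr : |r| < 1) : (0:ℝ) < 1 - |r| ∧ (0:ℝ) < 1 + |r| :=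
  ⟨by linarith, by positivity⟩

/-- increment bounds for `h c x = x - φ(x-c) - φ(x+c)`. -/
lemma aw_h_incr {r : ℝ} (hr : |r| < 1) (c : ℝ) {α β : ℝ} (hab : α ≤ β) :
    (1-|r|)/(1+|r|)*(β-α) ≤ (β - awPhi r (β-c) - awPhi r (β+c)) - (α - awPhi r (α-c) - awPhi r (α+c)) ∧
    (β - awPhi r (β-c) - awPhi r (β+c)) - (α - awPhi r (α-c) - awPhi r (α+c)) ≤ (1+|r|)/(1-|r|)*(β-α) := by
  obtain ⟨h1, h2⟩ := aw_one_abs_pos hr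
  have key := aw_incr (f := fun x => x - awPhi r (x-c) - awPhi r (x+c))
    (f' := fun x => 1 - (r^2 - r*Real.cos (x-c))/(1 - 2*r*Real.cos (x-c) + r^2)
                      - (r^2 - r*Real.cos (x+c))/(1 - 2*r*Real.cos (x+c) + r^2))
    (fun x => by
      have d1 := (awPhi_hasDeriv hr (x-c)).comp x ((hasDerivAt_id x).sub_const c)
      have d2 := (awPhi_hasDeriv hr (x+c)).comp x ((hasDerivAt_id x).add_const c)
      exact (((hasDerivAt_id x).sub d1).sub d2).congr_deriv (by beta_reduce; ring))
    (lo := (1-|r|)/(1+|r|)) (hi := (1+|r|)/(1-|r|))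
    (fun x => by
      obtain ⟨_, b1⟩ := awPhi_deriv_bounds hr (x-c)
      obtain ⟨_, b2⟩ := awPhi_deriv_bounds hr (x+c)
      have : (1-|r|)/(1+|r|) = 1 - |r|/(1+|r|) - |r|/(1+|r|) := by field_simp <;> ring_nf
      rw [this]; linarith [b1, b2])
    (fun x => by
      obtain ⟨b1, _⟩ := awPhi_deriv_bounds hr (x-c)
      obtain ⟨b2, _⟩ := awPhi_deriv_bounds hr (x+c)
      have : (1+|r|)/(1-|r|) = 1 + |r|/(1-|r|) + |r|/(1-|r|) := by field_simp <;> ring_nf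
      rw [this]
      have := neg_le.1 b1
      have := neg_le.1 b2
      linarith)
    hab
  exact key

/-- increment bounds for `g x = x/2 - φ(x)`. -/
lemma aw_g_incr {r : ℝ} (hr : |r| < 1) {α β : ℝ} (hab : α ≤ β) :
    (1-|r|)/(2*(1+|r|))*(β-α) ≤ (β/2 - awPhi r β) - (α/2 - awPhi r α) ∧
    (β/2 - awPhi r β) - (α/2 - awPhi r α) ≤ (1+|r|)/(2*(1-|r|))*(β-α) := by
  obtain ⟨h1, h2⟩ := aw_one_abs_pos hr
  exact aw_incr (f := fun x => x/2 - awPhi r x)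
    (f' := fun x => 1/2 - (r^2 - r*Real.cos x)/(1 - 2*r*Real.cos x + r^2))
    (fun x => by exact (((hasDerivAt_id x).div_const 2).sub (awPhi_hasDeriv hr x)).congr_deriv (by beta_reduce; ring))
    (lo := (1-|r|)/(2*(1+|r|))) (hi := (1+|r|)/(2*(1-|r|)))
    (fun x => by
      obtain ⟨_, b1⟩ := awPhi_deriv_bounds hr x
      have : (1-|r|)/(2*(1+|r|)) = 1/2 - |r|/(1+|r|) := by field_simp <;> ring_nf
      rw [this]; linarith [b1])
    (fun x => by
      obtain ⟨b1, _⟩ := awPhi_deriv_bounds hr x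
      have : (1+|r|)/(2*(1-|r|)) = 1/2 + |r|/(1-|r|) := by field_simp <;> ring_nf
      rw [this]
      have := neg_le.1 b1
      linarith)
    hab

/-- increment bounds for `w x = x - 2 φ(x)`. -/
lemma aw_w_incr {r : ℝ} (hr : |r| < 1) {α β : ℝ} (hab : α ≤ β) :
    (1-|r|)/(1+|r|)*(β-α) ≤ (β - 2*awPhi r β) - (α - 2*awPhi r α) ∧
    (β - 2*awPhi r β) - (α - 2*awPhi r α) ≤ (1+|r|)/(1-|r|)*(β-α) := by
  obtain ⟨h1, h2⟩ := aw_one_abs_pos hr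
  exact aw_incr (f := fun x => x - 2*awPhi r x)
    (f' := fun x => 1 - 2*((r^2 - r*Real.cos x)/(1 - 2*r*Real.cos x + r^2)))
    (fun x => by exact ((hasDerivAt_id x).sub ((awPhi_hasDeriv hr x).const_mul 2)).congr_deriv (by beta_reduce; ring))
    (lo := (1-|r|)/(1+|r|)) (hi := (1+|r|)/(1-|r|))
    (fun x => by
      obtain ⟨_, b1⟩ := awPhi_deriv_bounds hr x
      have : (1-|r|)/(1+|r|) = 1 - 2*(|r|/(1+|r|)) := by field_simp <;> ring_nf
      rw [this]; linarith [b1])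
    (fun x => by
      obtain ⟨b1, _⟩ := awPhi_deriv_bounds hr x
      have : (1+|r|)/(1-|r|) = 1 + 2*(|r|/(1-|r|)) := by field_simp <;> ring_nf
      rw [this]
      have := neg_le.1 b1
      linarith)
    hab

section Polar
open Complex

lemma aw_polar_mul (r₁ r₂ a₁ a₂ : ℝ) :
    (((r₁:ℝ):ℂ) * Complex.exp (Complex.I*(a₁:ℂ))) * (((r₂:ℝ):ℂ) * Complex.exp (Complex.I*(a₂:ℂ)))
      = (((r₁*r₂ : ℝ)):ℂ) * Complex.exp (Complex.I*((a₁+a₂ : ℝ):ℂ)) := by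
  push_cast
  rw [mul_add, Complex.exp_add]
  ring

lemma aw_polar_div (r₁ r₂ a₁ a₂ : ℝ) :
    (((r₁:ℝ):ℂ) * Complex.exp (Complex.I*(a₁:ℂ))) / (((r₂:ℝ):ℂ) * Complex.exp (Complex.I*(a₂:ℂ)))
      = (((r₁/r₂ : ℝ)):ℂ) * Complex.exp (Complex.I*((a₁-a₂ : ℝ):ℂ)) := by
  push_cast
  rw [mul_div_mul_comm, ← Complex.exp_sub]
  congr 1
  ring

lemma aw_polar_prod {n : ℕ} (f : Fin n → ℂ) (r a : Fin n → ℝ)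
    (h : ∀ j, f j = ((r j : ℝ):ℂ) * Complex.exp (Complex.I*((a j:ℝ):ℂ))) :
    ∏ j, f j = (((∏ j, r j : ℝ)):ℂ) * Complex.exp (Complex.I*((∑ j, a j : ℝ):ℂ)) := by
  calc ∏ j, f j = ∏ j, ((r j : ℝ):ℂ) * Complex.exp (Complex.I*((a j:ℝ):ℂ)) := by
        exact Finset.prod_congr rfl fun j _ => h j
    _ = (∏ j, ((r j:ℝ):ℂ)) * ∏ j, Complex.exp (Complex.I*((a j:ℝ):ℂ)) := by
        rw [Finset.prod_mul_distrib]
    _ = _ := by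
      rw [← Complex.exp_sum]
      push_cast
      rw [Finset.mul_sum]

end Polar

lemma aw_cos_cast (x : ℝ) : ((Real.cos x : ℝ):ℂ) = (Complex.exp (Complex.I*(x:ℂ)) + Complex.exp (-(Complex.I*(x:ℂ))))/2 := by
  rw [Complex.ofReal_cos, Complex.cos]
  ring_nf

lemma aw_factor {q : ℝ} (hq0 : q ≠ 0) (θ θ' : ℝ) :
    ((q:ℂ) * Complex.exp (Complex.I*(θ:ℂ)) + (q:ℂ)⁻¹ * Complex.exp (-(Complex.I*(θ:ℂ))))/2 - ((Real.cos θ' : ℝ):ℂ)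
    = (((1/(2*q) : ℝ)):ℂ) * Complex.exp (Complex.I * ((-θ : ℝ):ℂ)) *
      ((1 - (q:ℂ) * Complex.exp (Complex.I*((θ-θ' : ℝ):ℂ))) * (1 - (q:ℂ) * Complex.exp (Complex.I*((θ+θ' : ℝ):ℂ)))) := by
  rw [aw_cos_cast]
  have hqc : (q:ℂ) ≠ 0 := by exact_mod_cast hq0
  have e1 : Complex.exp (Complex.I*((θ-θ' : ℝ):ℂ)) = Complex.exp (Complex.I*(θ:ℂ)) / Complex.exp (Complex.I*(θ':ℂ)) := by
    rw [← Complex.exp_sub]; congr 1; push_cast; ring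
  have e2 : Complex.exp (Complex.I*((θ+θ' : ℝ):ℂ)) = Complex.exp (Complex.I*(θ:ℂ)) * Complex.exp (Complex.I*(θ':ℂ)) := by
    rw [← Complex.exp_add]; congr 1; push_cast; ring
  have e3 : Complex.exp (-(Complex.I*(θ:ℂ))) = (Complex.exp (Complex.I*(θ:ℂ)))⁻¹ := by
    rw [← Complex.exp_neg]
  have e4 : Complex.exp (-(Complex.I*(θ':ℂ))) = (Complex.exp (Complex.I*(θ':ℂ)))⁻¹ := by
    rw [← Complex.exp_neg]
  have e5 : Complex.exp (Complex.I * ((-θ : ℝ):ℂ)) = (Complex.exp (Complex.I*(θ:ℂ)))⁻¹ := by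
    rw [← Complex.exp_neg]; congr 1; push_cast; ring
  rw [e1, e2, e3, e4, e5]
  have hE := Complex.exp_ne_zero (Complex.I*(θ:ℂ))
  have hE' := Complex.exp_ne_zero (Complex.I*(θ':ℂ))
  push_cast
  field_simp
  ring

lemma aw_den_sin (θ : ℝ) :
    (1:ℂ) - Complex.exp (2*Complex.I*(θ:ℂ)) = ((2*Real.sin θ : ℝ):ℂ) * Complex.exp (Complex.I * ((θ - π/2 : ℝ):ℂ)) := by
  rw [show 2*Complex.I*(θ:ℂ) = ((2*θ:ℝ):ℂ)*Complex.I by push_cast; ring]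
  rw [show Complex.I * ((θ - π/2:ℝ):ℂ) = ((θ - π/2:ℝ):ℂ)*Complex.I by ring]
  rw [Complex.exp_mul_I, Complex.exp_mul_I]
  rw [← Complex.ofReal_cos, ← Complex.ofReal_sin, ← Complex.ofReal_cos, ← Complex.ofReal_sin]
  have e1 : Real.cos (2*θ) = 1 - 2*Real.sin θ^2 := by
    have h := Real.cos_two_mul θ
    have h2 := Real.sin_sq_add_cos_sq θ
    nlinarith
  have e2 : Real.sin (2*θ) = 2*Real.sin θ*Real.cos θ := Real.sin_two_mul θ
  have e3 : Real.cos (θ - π/2) = Real.sin θ := by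
    rw [Real.cos_sub]; simp
  have e4 : Real.sin (θ - π/2) = -Real.cos θ := by
    rw [Real.sin_sub]; simp
  rw [e1, e2, e3, e4]
  push_cast
  ring

lemma aw_exp_two (q θ : ℝ) :
    (1:ℂ) - (q:ℂ) * Complex.exp (2*Complex.I*(θ:ℂ)) = (1:ℂ) - (q:ℂ) * Complex.exp (Complex.I*((2*θ:ℝ):ℂ)) := by
  congr 2
  push_cast
  ring

noncomputable def awS (n : ℕ) (a b c d q : ℝ) (ξ : Fin n → ℝ) (θ : ℝ) : ℝ :=
  (awR a θ * awR b θ * awR c θ * awR d θ) / (2*Real.sin θ * awR q (2*θ)) *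
    ∏ j, (1/(2*q) * (awR q (θ - ξ j) * awR q (θ + ξ j)))

noncomputable def awPsi (n : ℕ) (a b c d q : ℝ) (ξ : Fin n → ℝ) (θ : ℝ) : ℝ :=
  ((awPhi a θ + awPhi b θ + awPhi c θ + awPhi d θ) - (θ - π/2) - awPhi q (2*θ)) +
    ∑ j, (-θ + awPhi q (θ - ξ j) + awPhi q (θ + ξ j))

lemma aw_master (n : ℕ) (a b c d q : ℝ)
    (ha : |a| < 1) (hb : |b| < 1) (hc : |c| < 1) (hd : |d| < 1) (hq : |q| < 1) (hq0 : q ≠ 0)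
    (ξ : Fin n → ℝ) (θ : ℝ) :
    ((1 - (a : ℂ) * Complex.exp (Complex.I * (θ : ℂ))) *
       (1 - (b : ℂ) * Complex.exp (Complex.I * (θ : ℂ))) *
       (1 - (c : ℂ) * Complex.exp (Complex.I * (θ : ℂ))) *
       (1 - (d : ℂ) * Complex.exp (Complex.I * (θ : ℂ)))) /
      ((1 - Complex.exp (2 * Complex.I * (θ : ℂ))) *
       (1 - (q : ℂ) * Complex.exp (2 * Complex.I * (θ : ℂ)))) *
    (∏ j : Fin n, (((q : ℂ) * Complex.exp (Complex.I * (θ : ℂ)) +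
                 (q : ℂ)⁻¹ * Complex.exp (-(Complex.I * (θ : ℂ)))) / 2 - ((Real.cos (ξ j) : ℝ) : ℂ)))
    = ((awS n a b c d q ξ θ : ℝ):ℂ) * Complex.exp (Complex.I * ((awPsi n a b c d q ξ θ : ℝ):ℂ)) := by
  have hnum : (1 - (a : ℂ) * Complex.exp (Complex.I * (θ : ℂ))) *
       (1 - (b : ℂ) * Complex.exp (Complex.I * (θ : ℂ))) *
       (1 - (c : ℂ) * Complex.exp (Complex.I * (θ : ℂ))) *
       (1 - (d : ℂ) * Complex.exp (Complex.I * (θ : ℂ)))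
      = (((awR a θ * awR b θ * awR c θ * awR d θ : ℝ)):ℂ) *
        Complex.exp (Complex.I * ((awPhi a θ + awPhi b θ + awPhi c θ + awPhi d θ : ℝ):ℂ)) := by
    rw [aw_rep ha θ, aw_rep hb θ, aw_rep hc θ, aw_rep hd θ]
    rw [aw_polar_mul, aw_polar_mul, aw_polar_mul]
  have hden : (1 - Complex.exp (2 * Complex.I * (θ : ℂ))) *
       (1 - (q : ℂ) * Complex.exp (2 * Complex.I * (θ : ℂ)))
      = (((2*Real.sin θ * awR q (2*θ) : ℝ)):ℂ) *
        Complex.exp (Complex.I * ((θ - π/2 + awPhi q (2*θ) : ℝ):ℂ)) := by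
    rw [show (2 * Complex.I * (θ:ℂ)) = (2*Complex.I*(θ:ℂ)) from rfl]
    rw [aw_den_sin θ, aw_exp_two q θ, aw_rep hq (2*θ)]
    rw [aw_polar_mul]
  have hprod : (∏ j : Fin n, (((q : ℂ) * Complex.exp (Complex.I * (θ : ℂ)) +
                 (q : ℂ)⁻¹ * Complex.exp (-(Complex.I * (θ : ℂ)))) / 2 - ((Real.cos (ξ j) : ℝ) : ℂ)))
      = (((∏ j, (1/(2*q) * (awR q (θ - ξ j) * awR q (θ + ξ j))) : ℝ)):ℂ) *
        Complex.exp (Complex.I * ((∑ j, (-θ + awPhi q (θ - ξ j) + awPhi q (θ + ξ j)) : ℝ):ℂ)) := by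
    apply aw_polar_prod _ _ _ (fun j => ?_)
    rw [aw_factor hq0 θ (ξ j), aw_rep hq (θ - ξ j), aw_rep hq (θ + ξ j)]
    rw [aw_polar_mul, aw_polar_mul]
    push_cast
    ring_nf
  rw [hnum, hden, hprod, aw_polar_div, aw_polar_mul, awS, awPsi]
  congr 2
  push_cast
  ring

lemma awS_neg (n : ℕ) (a b c d q : ℝ) (ξ : Fin n → ℝ) (θ : ℝ) :
    awS n a b c d q ξ (-θ) = - awS n a b c d q ξ θ := by
  unfold awS
  rw [Real.sin_neg]
  rw [awR_even a θ, awR_even b θ, awR_even c θ, awR_even d θ,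
    show (2*(-θ)) = -(2*θ) by ring, awR_even q (2*θ)]
  have hp : ∏ j, (1/(2*q) * (awR q (-θ - ξ j) * awR q (-θ + ξ j)))
      = ∏ j, (1/(2*q) * (awR q (θ - ξ j) * awR q (θ + ξ j))) := by
    refine Finset.prod_congr rfl fun j _ => ?_
    rw [show -θ - ξ j = -(θ + ξ j) by ring, show -θ + ξ j = -(θ - ξ j) by ring, awR_even, awR_even]
    ring
  rw [hp]
  ring

lemma awPsi_neg (n : ℕ) (a b c d q : ℝ) (ξ : Fin n → ℝ) (θ : ℝ) :
    awPsi n a b c d q ξ (-θ) = π - awPsi n a b c d q ξ θ := by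
  unfold awPsi
  rw [awPhi_neg a θ, awPhi_neg b θ, awPhi_neg c θ, awPhi_neg d θ,
    show (2*(-θ)) = -(2*θ) by ring, awPhi_neg q (2*θ)]
  have hs : ∑ j, (-(-θ) + awPhi q (-θ - ξ j) + awPhi q (-θ + ξ j))
      = ∑ j, -((-θ + awPhi q (θ - ξ j) + awPhi q (θ + ξ j))) := by
    refine Finset.sum_congr rfl fun j _ => ?_
    rw [show -θ - ξ j = -(θ + ξ j) by ring, show -θ + ξ j = -(θ - ξ j) by ring, awPhi_neg, awPhi_neg]
    ring
  rw [hs, Finset.sum_neg_distrib]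
  ring

lemma aw_half_div (x y : ℝ) : (1/2)*(x/y) = x/(2*y) := by
  rw [div_mul_div_comm, one_mul]

set_option maxHeartbeats 1000000 in
/-- Bounds for the zeros of the Askey–Wilson polynomial, characterized via the
second-order `q`-difference equation it satisfies. -/
theorem askey_wilson_zero_bounds
    (n : ℕ) (hn : 1 ≤ n) (a b c d q : ℝ)
    (ha : |a| < 1) (hb : |b| < 1) (hc : |c| < 1) (hd : |d| < 1)
    (hq : |q| < 1) (hq0 : q ≠ 0)
    (ξ : Fin n → ℝ)
    (hpos : ∀ j, 0 < ξ j) (hlt : ∀ j, ξ j < π)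
    (hdec : ∀ j j' : Fin n, j < j' → ξ j' < ξ j)
    (p : ℂ → ℂ)
    (hp : ∀ z : ℂ, p z = ∏ j : Fin n, (z - (Real.cos (ξ j) : ℂ)))
    (A : ℝ → ℂ)
    (hA : ∀ x : ℝ, A x =
      ((1 - (a : ℂ) * Complex.exp (Complex.I * (x : ℂ))) *
       (1 - (b : ℂ) * Complex.exp (Complex.I * (x : ℂ))) *
       (1 - (c : ℂ) * Complex.exp (Complex.I * (x : ℂ))) *
       (1 - (d : ℂ) * Complex.exp (Complex.I * (x : ℂ)))) /
      ((1 - Complex.exp (2 * Complex.I * (x : ℂ))) *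
       (1 - (q : ℂ) * Complex.exp (2 * Complex.I * (x : ℂ)))))
    (En : ℝ)
    (hEn : En = q ^ (-(n : ℤ)) * (1 - q ^ n) * (1 - a * b * c * d * q ^ ((n : ℤ) - 1)))
    (heq : ∀ x : ℝ, Complex.exp (2 * Complex.I * (x : ℂ)) ≠ 1 →
      A x * (p (((q : ℂ) * Complex.exp (Complex.I * (x : ℂ)) +
                 (q : ℂ)⁻¹ * Complex.exp (-(Complex.I * (x : ℂ)))) / 2)
              - p ((Real.cos x : ℂ))) +
      A (-x) * (p (((q : ℂ) * Complex.exp (-(Complex.I * (x : ℂ))) +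
                 (q : ℂ)⁻¹ * Complex.exp (Complex.I * (x : ℂ))) / 2)
              - p ((Real.cos x : ℂ)))
      = (En : ℂ) * p ((Real.cos x : ℂ)))
    (km kp : ℝ)
    (hkm : km = ((n : ℝ) - 1) * ((1 + |q|) / (1 - |q|)) +
      (1 / 2) * ((1 + |a|) / (1 - |a|) + (1 + |b|) / (1 - |b|) +
                 (1 + |c|) / (1 - |c|) + (1 + |d|) / (1 - |d|)))
    (hkp : kp = ((n : ℝ) - 1) * ((1 - |q|) / (1 + |q|)) +
      (1 / 2) * ((1 - |a|) / (1 + |a|) + (1 - |b|) / (1 + |b|) +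
                 (1 - |c|) / (1 + |c|) + (1 - |d|) / (1 + |d|))) :
    (∀ j : Fin n, π * ((n : ℝ) - j.val) / km ≤ ξ j ∧ ξ j ≤ π * ((n : ℝ) - j.val) / kp) ∧
    (∀ j j' : Fin n, j < j' →
      π * ((j'.val : ℝ) - j.val) / km ≤ ξ j - ξ j' ∧
      ξ j - ξ j' ≤ π * ((j'.val : ℝ) - j.val) / kp) := by

  -- basic positivity facts
  obtain ⟨hq1, hq2⟩ := aw_one_abs_pos hq
  obtain ⟨ha1, ha2⟩ := aw_one_abs_pos ha
  obtain ⟨hb1, hb2⟩ := aw_one_abs_pos hb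
  obtain ⟨hc1, hc2⟩ := aw_one_abs_pos hc
  obtain ⟨hd1, hd2⟩ := aw_one_abs_pos hd
  have hπ := Real.pi_pos
  set G : Fin n → ℝ := fun m =>
    (∑ j ∈ Finset.univ.erase m, (ξ m - awPhi q (ξ m - ξ j) - awPhi q (ξ m + ξ j))) +
    ((ξ m/2 - awPhi a (ξ m)) + (ξ m/2 - awPhi b (ξ m)) + (ξ m/2 - awPhi c (ξ m)) +
      (ξ m/2 - awPhi d (ξ m))) with hGdef
  have hGm : ∀ m, G m =
    (∑ j ∈ Finset.univ.erase m, (ξ m - awPhi q (ξ m - ξ j) - awPhi q (ξ m + ξ j))) +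
    ((ξ m/2 - awPhi a (ξ m)) + (ξ m/2 - awPhi b (ξ m)) + (ξ m/2 - awPhi c (ξ m)) +
      (ξ m/2 - awPhi d (ξ m))) := fun m => rfl
  have hcard : ∀ m : Fin n, ((Finset.univ.erase m).card : ℝ) = (n:ℝ) - 1 := by
    intro m
    rw [Finset.card_erase_of_mem (Finset.mem_univ m), Finset.card_univ, Fintype.card_fin,
      Nat.cast_sub hn]
    norm_num
  -- Step A : sin (G m) = 0
  have stepA : ∀ m : Fin n, Real.sin (G m) = 0 := by
    intro m
    have hsin : 0 < Real.sin (ξ m) := Real.sin_pos_of_pos_of_lt_pi (hpos m) (hlt m)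
    have hx : Complex.exp (2 * Complex.I * ((ξ m : ℝ) : ℂ)) ≠ 1 := by
      intro h
      have h0 : (1:ℂ) - Complex.exp (2*Complex.I*((ξ m : ℝ):ℂ)) = 0 := by rw [h]; ring
      rw [aw_den_sin] at h0
      rcases mul_eq_zero.1 h0 with h1 | h1
      · have : (2*Real.sin (ξ m) : ℝ) = 0 := by exact_mod_cast h1
        linarith
      · exact Complex.exp_ne_zero _ h1
    have hz : p ((Real.cos (ξ m) : ℝ):ℂ) = 0 := by
      rw [hp]; exact Finset.prod_eq_zero (Finset.mem_univ m) (by simp)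
    have he := heq (ξ m) hx
    rw [hz] at he
    simp only [sub_zero, mul_zero] at he
    simp only [hp] at he
    have eX : Complex.exp (-(Complex.I * ((ξ m : ℝ):ℂ))) = Complex.exp (Complex.I * ((-(ξ m) : ℝ):ℂ)) := by
      congr 1; push_cast; ring
    have eY : Complex.exp (Complex.I * ((ξ m : ℝ):ℂ)) = Complex.exp (-(Complex.I * ((-(ξ m) : ℝ):ℂ))) := by
      congr 1; push_cast; ring
    have ezm : ((q:ℂ) * Complex.exp (-(Complex.I * ((ξ m : ℝ):ℂ))) +
        (q:ℂ)⁻¹ * Complex.exp (Complex.I * ((ξ m : ℝ):ℂ)))/2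
        = ((q:ℂ) * Complex.exp (Complex.I * ((-(ξ m) : ℝ):ℂ)) +
        (q:ℂ)⁻¹ * Complex.exp (-(Complex.I * ((-(ξ m) : ℝ):ℂ))))/2 := by
      rw [eX, eY]
    rw [ezm] at he
    rw [hA (ξ m), hA (-(ξ m))] at he
    rw [aw_master n a b c d q ha hb hc hd hq hq0 ξ (ξ m),
        aw_master n a b c d q ha hb hc hd hq hq0 ξ (-(ξ m))] at he
    rw [awS_neg n a b c d q ξ (ξ m), awPsi_neg n a b c d q ξ (ξ m)] at he
    push_cast at he
    set Ψ : ℝ := awPsi n a b c d q ξ (ξ m) with hΨdef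
    have hexp : Complex.exp (Complex.I * ((π:ℂ) - (Ψ:ℂ)))
        = -Complex.exp (-(Complex.I * ((Ψ : ℝ):ℂ))) := by
      rw [show Complex.I * ((π:ℂ) - (Ψ:ℂ)) = (π:ℂ)*Complex.I + -(Complex.I * ((Ψ:ℝ):ℂ)) by
        push_cast; ring]
      rw [Complex.exp_add, Complex.exp_pi_mul_I]
      ring
    have hcosz : Complex.exp (Complex.I*((Ψ:ℝ):ℂ)) + Complex.exp (-(Complex.I*((Ψ:ℝ):ℂ)))
        = 2*((Real.cos Ψ : ℝ):ℂ) := by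
      rw [aw_cos_cast]; ring
    have hS0 : awS n a b c d q ξ (ξ m) ≠ 0 := by
      unfold awS
      apply mul_ne_zero
      · apply div_ne_zero
        · exact ne_of_gt (by
            have h1 := awR_pos ha (ξ m); have h2 := awR_pos hb (ξ m)
            have h3 := awR_pos hc (ξ m); have h4 := awR_pos hd (ξ m)
            positivity)
        · exact ne_of_gt (by
            have h5 := awR_pos hq (2*ξ m)
            positivity)
      · rw [Finset.prod_ne_zero_iff]
        intro j _
        apply mul_ne_zero
        · simp [hq0]
        · exact ne_of_gt (mul_pos (awR_pos hq _) (awR_pos hq _))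
    have h2 : ((awS n a b c d q ξ (ξ m) : ℝ):ℂ) * (2*((Real.cos Ψ : ℝ):ℂ)) = 0 := by
      rw [← hcosz]
      linear_combination he + ((awS n a b c d q ξ (ξ m) : ℝ):ℂ) * hexp
    have hcos0 : Real.cos Ψ = 0 := by
      rcases mul_eq_zero.1 h2 with h3 | h3
      · exact absurd (by exact_mod_cast h3) hS0
      · have h4 : (2:ℝ) * Real.cos Ψ = 0 := by exact_mod_cast h3
        linarith
    -- identify Ψ with π/2 - G m
    have hΨG : Ψ = π/2 - G m := by
      rw [hΨdef]
      unfold awPsi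
      have hsplit : ∑ j, (-(ξ m) + awPhi q (ξ m - ξ j) + awPhi q (ξ m + ξ j))
          = (∑ j ∈ Finset.univ.erase m, (-(ξ m) + awPhi q (ξ m - ξ j) + awPhi q (ξ m + ξ j))) +
            (-(ξ m) + awPhi q (ξ m - ξ m) + awPhi q (ξ m + ξ m)) :=
        (Finset.sum_erase_add _ _ (Finset.mem_univ m)).symm
      rw [hsplit, sub_self, awPhi_zero, show ξ m + ξ m = 2*(ξ m) by ring]
      have hflip : ∑ j ∈ Finset.univ.erase m, (ξ m - awPhi q (ξ m - ξ j) - awPhi q (ξ m + ξ j))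
          = - ∑ j ∈ Finset.univ.erase m, (-(ξ m) + awPhi q (ξ m - ξ j) + awPhi q (ξ m + ξ j)) := by
        rw [← Finset.sum_neg_distrib]
        exact Finset.sum_congr rfl fun j _ => by ring
      rw [hGm m, hflip]
      ring
    rw [hΨG, Real.cos_pi_div_two_sub] at hcos0
    exact hcos0
  -- Step B : kp * ξ m ≤ G m ≤ km * ξ m
  have stepB : ∀ m : Fin n, kp * ξ m ≤ G m ∧ G m ≤ km * ξ m := by
    intro m
    have hh : ∀ j ∈ Finset.univ.erase m,
        (1-|q|)/(1+|q|) * ξ m ≤ ξ m - awPhi q (ξ m - ξ j) - awPhi q (ξ m + ξ j) ∧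
        ξ m - awPhi q (ξ m - ξ j) - awPhi q (ξ m + ξ j) ≤ (1+|q|)/(1-|q|) * ξ m := by
      intro j _
      have h0 := aw_h_incr hq (ξ j) (show (0:ℝ) ≤ ξ m from (hpos m).le)
      constructor
      · have := h0.1; simpa [awPhi_neg] using this
      · have := h0.2; simpa [awPhi_neg] using this
    have hsum1 : ((n:ℝ)-1) * ((1-|q|)/(1+|q|) * ξ m)
        ≤ ∑ j ∈ Finset.univ.erase m, (ξ m - awPhi q (ξ m - ξ j) - awPhi q (ξ m + ξ j)) := by
      calc ((n:ℝ)-1) * ((1-|q|)/(1+|q|) * ξ m)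
          = ∑ _j ∈ Finset.univ.erase m, ((1-|q|)/(1+|q|) * ξ m) := by
            rw [Finset.sum_const, nsmul_eq_mul, hcard m]
        _ ≤ _ := Finset.sum_le_sum (fun j hj => (hh j hj).1)
    have hsum2 : ∑ j ∈ Finset.univ.erase m, (ξ m - awPhi q (ξ m - ξ j) - awPhi q (ξ m + ξ j))
        ≤ ((n:ℝ)-1) * ((1+|q|)/(1-|q|) * ξ m) := by
      calc ∑ j ∈ Finset.univ.erase m, (ξ m - awPhi q (ξ m - ξ j) - awPhi q (ξ m + ξ j))
          ≤ ∑ _j ∈ Finset.univ.erase m, ((1+|q|)/(1-|q|) * ξ m) :=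
            Finset.sum_le_sum (fun j hj => (hh j hj).2)
        _ = _ := by rw [Finset.sum_const, nsmul_eq_mul, hcard m]
    have hg : ∀ t : ℝ, |t| < 1 →
        (1-|t|)/(2*(1+|t|)) * ξ m ≤ ξ m/2 - awPhi t (ξ m) ∧
        ξ m/2 - awPhi t (ξ m) ≤ (1+|t|)/(2*(1-|t|)) * ξ m := by
      intro t ht
      have h0 := aw_g_incr ht (show (0:ℝ) ≤ ξ m from (hpos m).le)
      constructor
      · have := h0.1; simpa [awPhi_zero] using this
      · have := h0.2; simpa [awPhi_zero] using this
    obtain ⟨ga1, ga2⟩ := hg a ha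
    obtain ⟨gb1, gb2⟩ := hg b hb
    obtain ⟨gc1, gc2⟩ := hg c hc
    obtain ⟨gd1, gd2⟩ := hg d hd
    simp only [← aw_half_div] at ga1 ga2 gb1 gb2 gc1 gc2 gd1 gd2
    rw [hGm m]
    constructor
    · have hkpξ : kp * ξ m = ((n:ℝ)-1) * ((1-|q|)/(1+|q|) * ξ m)
          + (1/2)*((1-|a|)/(1+|a|))*ξ m + (1/2)*((1-|b|)/(1+|b|))*ξ m
          + (1/2)*((1-|c|)/(1+|c|))*ξ m + (1/2)*((1-|d|)/(1+|d|))*ξ m := by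
        rw [hkp]; ring
      linarith [hsum1, ga1, gb1, gc1, gd1]
    · have hkmξ : km * ξ m = ((n:ℝ)-1) * ((1+|q|)/(1-|q|) * ξ m)
          + (1/2)*((1+|a|)/(1-|a|))*ξ m + (1/2)*((1+|b|)/(1-|b|))*ξ m
          + (1/2)*((1+|c|)/(1-|c|))*ξ m + (1/2)*((1+|d|)/(1-|d|))*ξ m := by
        rw [hkm]; ring
      linarith [hsum2, ga2, gb2, gc2, gd2]
  -- Step C : G m < (n+1) π
  have stepC : ∀ m : Fin n, G m < ((n:ℝ)+1)*π := by
    intro m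
    have hρ : 0 < (1-|q|)/(1+|q|) := div_pos hq1 hq2
    have hh : ∀ j : Fin n, ξ m - awPhi q (ξ m - ξ j) - awPhi q (ξ m + ξ j) ≤ π := by
      intro j
      have h0 := (aw_h_incr hq (ξ j) (show ξ m ≤ π from (hlt m).le)).1
      have hpi : π - awPhi q (π - ξ j) - awPhi q (π + ξ j) = π := by
        rw [awPhi_pi_add]; ring
      nlinarith [mul_nonneg hρ.le (show (0:ℝ) ≤ π - ξ m by linarith [hlt m])]
    have hgs : ∀ t : ℝ, |t| < 1 → ξ m/2 - awPhi t (ξ m) < π/2 := by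
      intro t ht
      have h0 := (aw_g_incr ht (show ξ m ≤ π from (hlt m).le)).1
      have hpi : π/2 - awPhi t π = π/2 := by rw [awPhi_pi]; ring
      have hσ : 0 < (1-|t|)/(2*(1+|t|)) := by
        obtain ⟨h1, h2⟩ := aw_one_abs_pos ht
        positivity
      nlinarith [mul_pos hσ (show (0:ℝ) < π - ξ m by linarith [hlt m])]
    have hsum : ∑ j ∈ Finset.univ.erase m, (ξ m - awPhi q (ξ m - ξ j) - awPhi q (ξ m + ξ j))
        ≤ ((n:ℝ)-1) * π := by
      calc ∑ j ∈ Finset.univ.erase m, (ξ m - awPhi q (ξ m - ξ j) - awPhi q (ξ m + ξ j))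
          ≤ ∑ _j ∈ Finset.univ.erase m, π := Finset.sum_le_sum (fun j _ => hh j)
        _ = _ := by rw [Finset.sum_const, nsmul_eq_mul, hcard m]
    have := hgs a ha; have := hgs b hb; have := hgs c hc; have := hgs d hd
    rw [hGm m]
    linarith
  -- Step D : difference bounds
  have stepD : ∀ m m' : Fin n, m < m' →
      kp*(ξ m - ξ m') ≤ G m - G m' ∧ G m - G m' ≤ km*(ξ m - ξ m') := by
    intro m m' hmm'
    have hne : m ≠ m' := ne_of_lt hmm'
    have hΔ : ξ m' ≤ ξ m := (hdec m m' hmm').le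
    have hΔpos : 0 < ξ m - ξ m' := by linarith [hdec m m' hmm']
    have hn2 : 2 ≤ n := by
      have h1 : (m:ℕ) < (m':ℕ) := hmm'
      have h2 := m'.isLt
      omega
    set S2 := (Finset.univ.erase m).erase m' with hS2
    have hm'mem : m' ∈ Finset.univ.erase m :=
      Finset.mem_erase.2 ⟨hne.symm, Finset.mem_univ m'⟩
    have hmmem : m ∈ Finset.univ.erase m' :=
      Finset.mem_erase.2 ⟨hne, Finset.mem_univ m⟩
    have hm'notS2 : m' ∉ S2 := Finset.notMem_erase m' _
    have hmnotS2 : m ∉ S2 := fun h =>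
      Finset.notMem_erase m _ (Finset.mem_of_mem_erase h)
    have e1 : Finset.univ.erase m = insert m' S2 := (Finset.insert_erase hm'mem).symm
    have e2 : Finset.univ.erase m' = insert m S2 := by
      rw [hS2, Finset.erase_right_comm]
      exact (Finset.insert_erase hmmem).symm
    have hcardS2 : ((S2.card : ℕ) : ℝ) = (n:ℝ) - 2 := by
      rw [hS2, Finset.card_erase_of_mem hm'mem, Finset.card_erase_of_mem (Finset.mem_univ m),
        Finset.card_univ, Fintype.card_fin]
      have : n - 1 - 1 = n - 2 := by omega
      rw [this, Nat.cast_sub hn2]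
      norm_num
    -- decompose the sums
    have hdm : G m = (ξ m - awPhi q (ξ m - ξ m') - awPhi q (ξ m + ξ m')) +
        (∑ j ∈ S2, (ξ m - awPhi q (ξ m - ξ j) - awPhi q (ξ m + ξ j))) +
        ((ξ m/2 - awPhi a (ξ m)) + (ξ m/2 - awPhi b (ξ m)) + (ξ m/2 - awPhi c (ξ m)) +
          (ξ m/2 - awPhi d (ξ m))) := by
      rw [hGm m, e1, Finset.sum_insert hm'notS2]
    have hdm' : G m' = (ξ m' - awPhi q (ξ m' - ξ m) - awPhi q (ξ m' + ξ m)) +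
        (∑ j ∈ S2, (ξ m' - awPhi q (ξ m' - ξ j) - awPhi q (ξ m' + ξ j))) +
        ((ξ m'/2 - awPhi a (ξ m')) + (ξ m'/2 - awPhi b (ξ m')) + (ξ m'/2 - awPhi c (ξ m')) +
          (ξ m'/2 - awPhi d (ξ m'))) := by
      rw [hGm m', e2, Finset.sum_insert hmnotS2]
    -- the special pair term
    have hwid : (ξ m - awPhi q (ξ m - ξ m') - awPhi q (ξ m + ξ m')) -
        (ξ m' - awPhi q (ξ m' - ξ m) - awPhi q (ξ m' + ξ m))
        = (ξ m - ξ m') - 2*awPhi q (ξ m - ξ m') := by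
      rw [show ξ m' - ξ m = -(ξ m - ξ m') by ring, awPhi_neg,
        show ξ m' + ξ m = ξ m + ξ m' by ring]
      ring
    have hw := aw_w_incr hq (show (0:ℝ) ≤ ξ m - ξ m' from hΔpos.le)
    -- sums over S2
    have hhS2 : ∀ j ∈ S2,
        (1-|q|)/(1+|q|) * (ξ m - ξ m') ≤
          (ξ m - awPhi q (ξ m - ξ j) - awPhi q (ξ m + ξ j)) -
          (ξ m' - awPhi q (ξ m' - ξ j) - awPhi q (ξ m' + ξ j)) ∧
        (ξ m - awPhi q (ξ m - ξ j) - awPhi q (ξ m + ξ j)) -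
          (ξ m' - awPhi q (ξ m' - ξ j) - awPhi q (ξ m' + ξ j)) ≤
          (1+|q|)/(1-|q|) * (ξ m - ξ m') := by
      intro j _
      exact aw_h_incr hq (ξ j) hΔ
    have hS2sum1 : ((n:ℝ)-2) * ((1-|q|)/(1+|q|) * (ξ m - ξ m'))
        ≤ ∑ j ∈ S2, ((ξ m - awPhi q (ξ m - ξ j) - awPhi q (ξ m + ξ j)) -
          (ξ m' - awPhi q (ξ m' - ξ j) - awPhi q (ξ m' + ξ j))) := by
      calc ((n:ℝ)-2) * ((1-|q|)/(1+|q|) * (ξ m - ξ m'))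
          = ∑ _j ∈ S2, ((1-|q|)/(1+|q|) * (ξ m - ξ m')) := by
            rw [Finset.sum_const, nsmul_eq_mul, hcardS2]
        _ ≤ _ := Finset.sum_le_sum (fun j hj => (hhS2 j hj).1)
    have hS2sum2 : ∑ j ∈ S2, ((ξ m - awPhi q (ξ m - ξ j) - awPhi q (ξ m + ξ j)) -
          (ξ m' - awPhi q (ξ m' - ξ j) - awPhi q (ξ m' + ξ j)))
        ≤ ((n:ℝ)-2) * ((1+|q|)/(1-|q|) * (ξ m - ξ m')) := by
      calc ∑ j ∈ S2, ((ξ m - awPhi q (ξ m - ξ j) - awPhi q (ξ m + ξ j)) -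
          (ξ m' - awPhi q (ξ m' - ξ j) - awPhi q (ξ m' + ξ j)))
          ≤ ∑ _j ∈ S2, ((1+|q|)/(1-|q|) * (ξ m - ξ m')) :=
            Finset.sum_le_sum (fun j hj => (hhS2 j hj).2)
        _ = _ := by rw [Finset.sum_const, nsmul_eq_mul, hcardS2]
    have hS2dist : ∑ j ∈ S2, ((ξ m - awPhi q (ξ m - ξ j) - awPhi q (ξ m + ξ j)) -
          (ξ m' - awPhi q (ξ m' - ξ j) - awPhi q (ξ m' + ξ j)))
        = (∑ j ∈ S2, (ξ m - awPhi q (ξ m - ξ j) - awPhi q (ξ m + ξ j))) -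
          (∑ j ∈ S2, (ξ m' - awPhi q (ξ m' - ξ j) - awPhi q (ξ m' + ξ j))) :=
      by rw [← Finset.sum_sub_distrib]
    have hga := aw_g_incr ha hΔ
    have hgb := aw_g_incr hb hΔ
    have hgc := aw_g_incr hc hΔ
    have hgd := aw_g_incr hd hΔ
    rw [hS2dist] at hS2sum1 hS2sum2
    simp only [← aw_half_div] at hga hgb hgc hgd
    rw [awPhi_zero] at hw
    constructor
    · have hkpΔ : kp * (ξ m - ξ m') = ((n:ℝ)-2) * ((1-|q|)/(1+|q|) * (ξ m - ξ m'))
          + (1-|q|)/(1+|q|) * (ξ m - ξ m')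
          + (1/2)*((1-|a|)/(1+|a|))*(ξ m - ξ m') + (1/2)*((1-|b|)/(1+|b|))*(ξ m - ξ m')
          + (1/2)*((1-|c|)/(1+|c|))*(ξ m - ξ m') + (1/2)*((1-|d|)/(1+|d|))*(ξ m - ξ m') := by
        rw [hkp]; ring
      rw [hdm, hdm']
      linarith [hS2sum1, hw.1, hga.1, hgb.1, hgc.1, hgd.1, hwid]
    · have hkmΔ : km * (ξ m - ξ m') = ((n:ℝ)-2) * ((1+|q|)/(1-|q|) * (ξ m - ξ m'))
          + (1+|q|)/(1-|q|) * (ξ m - ξ m')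
          + (1/2)*((1+|a|)/(1-|a|))*(ξ m - ξ m') + (1/2)*((1+|b|)/(1-|b|))*(ξ m - ξ m')
          + (1/2)*((1+|c|)/(1-|c|))*(ξ m - ξ m') + (1/2)*((1+|d|)/(1-|d|))*(ξ m - ξ m') := by
        rw [hkm]; ring
      rw [hdm, hdm']
      linarith [hS2sum2, hw.2, hga.2, hgb.2, hgc.2, hgd.2, hwid]
  -- positivity of kp and km
  have kp_pos : 0 < kp := by
    rw [hkp]
    have h1 : (0:ℝ) ≤ ((n:ℝ)-1) * ((1-|q|)/(1+|q|)) := by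
      apply mul_nonneg
      · have : (1:ℝ) ≤ (n:ℝ) := by exact_mod_cast hn
        linarith
      · positivity
    have h2 : (0:ℝ) < (1/2)*((1-|a|)/(1+|a|) + (1-|b|)/(1+|b|) + (1-|c|)/(1+|c|) + (1-|d|)/(1+|d|)) := by
      have := div_pos ha1 ha2; have := div_pos hb1 hb2
      have := div_pos hc1 hc2; have := div_pos hd1 hd2
      linarith
    linarith
  have km_pos : 0 < km := by
    rw [hkm]
    have h1 : (0:ℝ) ≤ ((n:ℝ)-1) * ((1+|q|)/(1-|q|)) := by
      apply mul_nonneg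
      · have : (1:ℝ) ≤ (n:ℝ) := by exact_mod_cast hn
        linarith
      · positivity
    have h2 : (0:ℝ) < (1/2)*((1+|a|)/(1-|a|) + (1+|b|)/(1-|b|) + (1+|c|)/(1-|c|) + (1+|d|)/(1-|d|)) := by
      have := div_pos ha2 ha1; have := div_pos hb2 hb1
      have := div_pos hc2 hc1; have := div_pos hd2 hd1
      linarith
    linarith
  -- integers
  have hKex : ∀ m : Fin n, ∃ k : ℤ, (k:ℝ)*π = G m := fun m =>
    Real.sin_eq_zero_iff.1 (stepA m)
  choose K hK using hKex
  have hK1 : ∀ m, 1 ≤ K m := by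
    intro m
    have h1 : 0 < G m := lt_of_lt_of_le (mul_pos kp_pos (hpos m)) (stepB m).1
    rw [← hK m] at h1
    have : (0:ℝ) < (K m : ℝ) := by
      by_contra hcon
      push_neg at hcon
      nlinarith
    have : (0:ℤ) < K m := by exact_mod_cast this
    omega
  have hKn : ∀ m, K m ≤ (n:ℤ) := by
    intro m
    have h1 : G m < ((n:ℝ)+1)*π := stepC m
    rw [← hK m] at h1
    have h2 : (K m : ℝ) < (n:ℝ)+1 := by
      by_contra hcon
      push_neg at hcon
      nlinarith
    have : (K m : ℝ) < ((n:ℤ):ℝ)+1 := by exact_mod_cast h2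
    have : K m < (n:ℤ)+1 := by exact_mod_cast this
    omega
  have hKanti : ∀ m m' : Fin n, m < m' → K m' < K m := by
    intro m m' hmm'
    have hΔpos : 0 < ξ m - ξ m' := by linarith [hdec m m' hmm']
    have h1 : 0 < G m - G m' := lt_of_lt_of_le (mul_pos kp_pos hΔpos) (stepD m m' hmm').1
    rw [← hK m, ← hK m'] at h1
    have h2 : (K m' : ℝ) < (K m : ℝ) := by nlinarith
    exact_mod_cast h2
  have hKchain : ∀ (dd : ℕ) (j j' : Fin n), j.val + dd = j'.val → K j' + dd ≤ K j := by
    intro dd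
    induction dd with
    | zero =>
      intro j j' h
      have : j = j' := Fin.ext (by omega)
      subst this
      simp
    | succ k ih =>
      intro j j' h
      have hjlt : j.val + k < n := by
        have := j'.isLt
        omega
      have h1 := ih j ⟨j.val + k, hjlt⟩ rfl
      have h2 : (⟨j.val + k, hjlt⟩ : Fin n) < j' := by
        simp only [Fin.lt_def]
        omega
      have h3 := hKanti _ _ h2
      push_cast
      push_cast at h1
      omega
  have hKeq : ∀ j : Fin n, K j = (n:ℤ) - j.val := by
    intro j
    have hlast : (n:ℕ) - 1 < n := by omega
    have hfirst : (0:ℕ) < n := by omega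
    have h1 := hKchain ((n-1) - j.val) j ⟨n-1, hlast⟩ (by
      simp only []
      have := j.isLt
      omega)
    have h2 := hKchain j.val ⟨0, hfirst⟩ j (by simp)
    have h3 := hK1 ⟨n-1, hlast⟩
    have h4 := hKn ⟨0, hfirst⟩
    have hj := j.isLt
    omega
  have hGeq : ∀ j : Fin n, G j = ((n:ℝ) - j.val)*π := by
    intro j
    rw [← hK j, hKeq j]
    push_cast
    ring
  constructor
  · intro j
    have hB := stepB j
    rw [hGeq j] at hB
    constructor
    · rw [div_le_iff₀ km_pos]
      nlinarith [hB.2]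
    · rw [le_div_iff₀ kp_pos]
      nlinarith [hB.1]
  · intro j j' hjj'
    have hD := stepD j j' hjj'
    rw [hGeq j, hGeq j'] at hD
    have hj'n : (j':ℕ) < n := j'.isLt
    have hcast : ((n:ℝ) - j.val)*π - ((n:ℝ) - j'.val)*π = ((j'.val:ℝ) - j.val)*π := by ring
    rw [hcast] at hD
    constructor
    · rw [div_le_iff₀ km_pos]
      nlinarith [hD.2]
    · rw [le_div_iff₀ kp_pos]
      nlinarith [hD.1]
end

section
/- Let n ≥ 1 and let a, b, c, d > 0. Suppose ξ_1 > ξ_2 > … > ξ_n > 0 are real numbers such that, with p : ℂ → ℂ defined by p(ξ) = ∏_{j=1}^n (ξ² − ξ_j²), the difference equation A(ξ)·(p(ξ+i) − p(ξ)) + A(−ξ)·(p(ξ−i) − p(ξ)) = E_n · p(ξ) holds for every ξ ∈ ℂ with 2ξ(2ξ+i) ≠ 0, where A(ξ) = (ξ+ia)(ξ+ib)(ξ+ic)(ξ+id)/(2ξ(2ξ+i)) and E_n = −n(n+a+b+c+d−1). Then for all 1 ≤ j ≤ n one has ξ_j ≥ π(n+1−j)/k₋, and for all 1 ≤ j < j′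 ≤ n one has ξ_j − ξ_{j′} ≥ π(j′−j)/k₋, where k₋ = 2(n−1) + a^{−1} + b^{−1} + c^{−1} + d^{−1}. -/
open Real Finset

private lemma arctan_lipschitz : LipschitzWith 1 Real.arctan := by
  apply lipschitzWith_of_nnnorm_deriv_le Real.differentiable_arctan
  intro x
  simp only [Real.deriv_arctan]
  rw [← NNReal.coe_le_coe, coe_nnnorm, Real.norm_eq_abs, NNReal.coe_one,
    abs_of_pos (by positivity), div_le_one (by positivity)]
  nlinarith [sq_nonneg x]

private lemma arctan_sub_le {x y : ℝ} (h : y ≤ x) : arctan x - arctan y ≤ x - y := by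
  have h1 := arctan_lipschitz.dist_le_mul x y
  rw [Real.dist_eq, Real.dist_eq, NNReal.coe_one, one_mul] at h1
  calc arctan x - arctan y ≤ |arctan x - arctan y| := le_abs_self _
    _ ≤ |x - y| := h1
    _ = x - y := abs_of_nonneg (sub_nonneg.2 h)

private lemma arctan_le_self' {x : ℝ} (h : 0 ≤ x) : arctan x ≤ x := by
  have := arctan_sub_le h
  simpa [Real.arctan_zero] using this

private lemma arctan_pos' {x : ℝ} (h : 0 < x) : 0 < arctan x := by
  have := Real.arctan_strictMono h
  simpa [Real.arctan_zero] using this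

private lemma polar1 (x y : ℝ) (hx : 0 < x) :
    (x : ℂ) + (y : ℂ) * Complex.I =
      ((Real.sqrt (x ^ 2 + y ^ 2) : ℝ) : ℂ) *
        Complex.exp (((Real.arctan (y / x) : ℝ) : ℂ) * Complex.I) := by
  have hr : Real.sqrt (x ^ 2 + y ^ 2) = x * Real.sqrt (1 + (y / x) ^ 2) := by
    have h : x ^ 2 + y ^ 2 = x ^ 2 * (1 + (y / x) ^ 2) := by field_simp
    rw [h, Real.sqrt_mul (sq_nonneg x), Real.sqrt_sq hx.le]
  have hs : 0 < Real.sqrt (1 + (y / x) ^ 2) := Real.sqrt_pos.2 (by positivity)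
  have hcos : Real.sqrt (x ^ 2 + y ^ 2) * Real.cos (arctan (y / x)) = x := by
    rw [Real.cos_arctan, hr]; field_simp
  have hsin : Real.sqrt (x ^ 2 + y ^ 2) * Real.sin (arctan (y / x)) = y := by
    rw [Real.sin_arctan, hr]; field_simp
  calc (x : ℂ) + (y : ℂ) * Complex.I
      = ((Real.sqrt (x ^ 2 + y ^ 2) * Real.cos (arctan (y / x)) : ℝ) : ℂ)
        + ((Real.sqrt (x ^ 2 + y ^ 2) * Real.sin (arctan (y / x)) : ℝ) : ℂ) * Complex.I := by
        rw [hcos, hsin]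
    _ = _ := by
        rw [Complex.exp_mul_I, ← Complex.ofReal_cos, ← Complex.ofReal_sin]
        push_cast
        ring

private lemma expI_add (α β : ℝ) :
    Complex.exp (((α : ℝ) : ℂ) * Complex.I) * Complex.exp (((β : ℝ) : ℂ) * Complex.I)
      = Complex.exp (((α + β : ℝ) : ℂ) * Complex.I) := by
  rw [← Complex.exp_add]; push_cast; ring_nf

private lemma polar_mul (r1 r2 θ1 θ2 : ℝ) :
    (((r1 : ℝ) : ℂ) * Complex.exp (((θ1 : ℝ) : ℂ) * Complex.I)) *
      (((r2 : ℝ) : ℂ) * Complex.exp (((θ2 : ℝ) : ℂ) * Complex.I))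
      = ((r1 * r2 : ℝ) : ℂ) * Complex.exp (((θ1 + θ2 : ℝ) : ℂ) * Complex.I) := by
  rw [← expI_add]; push_cast; ring

private lemma polar2 (x y : ℝ) (hy : 0 < y) :
    (x : ℂ) + (y : ℂ) * Complex.I =
      ((Real.sqrt (x ^ 2 + y ^ 2) : ℝ) : ℂ) *
        Complex.exp (((π / 2 - Real.arctan (x / y) : ℝ) : ℂ) * Complex.I) := by
  have h1 := polar1 y (-x) hy
  have hI : Complex.exp (((π / 2 : ℝ) : ℂ) * Complex.I) = Complex.I := by
    rw [Complex.exp_mul_I, ← Complex.ofReal_cos, ← Complex.ofReal_sin]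
    simp
  have key : (x : ℂ) + (y : ℂ) * Complex.I
      = Complex.exp (((π / 2 : ℝ) : ℂ) * Complex.I) * ((y : ℂ) + ((-x : ℝ) : ℂ) * Complex.I) := by
    rw [hI]; push_cast; ring_nf; rw [Complex.I_sq]; ring
  rw [key, h1, show (-x / y) = -(x / y) by ring, Real.arctan_neg]
  rw [show y ^ 2 + (-x) ^ 2 = x ^ 2 + y ^ 2 by ring]
  rw [mul_comm (Complex.exp _), mul_assoc, expI_add]
  ring_nf

private lemma polar3 (u : ℝ) :
    (u : ℂ) + Complex.I =
      ((Real.sqrt (u ^ 2 + 1) : ℝ) : ℂ) *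
        Complex.exp (((π / 2 - Real.arctan u : ℝ) : ℂ) * Complex.I) := by
  have := polar2 u 1 one_pos
  simpa using this

private lemma prod_polar {n : ℕ} (r θ : Fin n → ℝ) :
    ∏ j, (((r j : ℝ) : ℂ) * Complex.exp (((θ j : ℝ) : ℂ) * Complex.I))
      = ((∏ j, r j : ℝ) : ℂ) * Complex.exp (((∑ j, θ j : ℝ) : ℂ) * Complex.I) := by
  rw [Finset.prod_mul_distrib]
  congr 1
  · push_cast; rfl
  · rw [← Complex.exp_sum]
    congr 1
    push_cast
    rw [Finset.sum_mul]

private noncomputable def Sfun {n : ℕ} (ξ : Fin n → ℝ) (a b c d : ℝ) (k : Fin n) : ℝ :=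
  (∑ j, (arctan (ξ k - ξ j) + arctan (ξ k + ξ j))) - arctan (2 * ξ k)
    + (arctan (ξ k / a) + arctan (ξ k / b) + arctan (ξ k / c) + arctan (ξ k / d))

private lemma Sfun_erase {n : ℕ} (ξ : Fin n → ℝ) (a b c d : ℝ) (k : Fin n) :
    Sfun ξ a b c d k
      = (∑ j ∈ univ.erase k, (arctan (ξ k - ξ j) + arctan (ξ k + ξ j)))
        + (arctan (ξ k / a) + arctan (ξ k / b) + arctan (ξ k / c) + arctan (ξ k / d)) := by
  unfold Sfun
  rw [← Finset.add_sum_erase univ _ (Finset.mem_univ k)]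
  simp [Real.arctan_zero, two_mul]
private lemma Sfun_int {n : ℕ} (ξ : Fin n → ℝ) (a b c d : ℝ)
    (ha : 0 < a) (hb : 0 < b) (hc : 0 < c) (hd : 0 < d)
    (hpos : ∀ j, 0 < ξ j)
    (p : ℂ → ℂ)
    (hp : ∀ z : ℂ, p z = ∏ j : Fin n, (z ^ 2 - ((ξ j : ℂ)) ^ 2))
    (A : ℂ → ℂ)
    (hA : ∀ z : ℂ, A z =
      ((z + Complex.I * (a : ℂ)) * (z + Complex.I * (b : ℂ)) *
       (z + Complex.I * (c : ℂ)) * (z + Complex.I * (d : ℂ))) /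
      (2 * z * (2 * z + Complex.I)))
    (En : ℝ)
    (heq : ∀ z : ℂ, 2 * z * (2 * z + Complex.I) ≠ 0 →
      A z * (p (z + Complex.I) - p z) + A (-z) * (p (z - Complex.I) - p z)
        = (En : ℂ) * p z)
    (k : Fin n) :
    ∃ m : ℤ, Sfun ξ a b c d k = m * π := by
  set x := ξ k with hx
  have hx0 : 0 < x := hpos k
  set z : ℂ := (x : ℂ) with hz
  have hz20 : (2 : ℂ) * z ≠ 0 := by
    rw [hz]
    exact mul_ne_zero two_ne_zero (Complex.ofReal_ne_zero.mpr hx0.ne')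
  have hzI : (2 : ℂ) * z + Complex.I ≠ 0 := by
    intro h
    have h2 := congrArg Complex.im h
    rw [hz] at h2
    simp at h2
  have hD : 2 * z * (2 * z + Complex.I) ≠ 0 := mul_ne_zero hz20 hzI
  have hpz : p z = 0 := by
    rw [hp]
    refine Finset.prod_eq_zero (Finset.mem_univ k) ?_
    rw [hz, hx]
    ring
  have key : A z * p (z + Complex.I) + A (-z) * p (z - Complex.I) = 0 := by
    have h := heq z hD
    rw [hpz] at h
    simpa using h
  have hzc : (starRingEnd ℂ) z = z := by rw [hz]; exact Complex.conj_ofReal x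
  have hconj : (starRingEnd ℂ) (p (z + Complex.I)) = p (z - Complex.I) := by
    rw [hp, hp, map_prod]
    refine Finset.prod_congr rfl fun j _ => ?_
    simp only [map_sub, map_pow, map_add, hzc, Complex.conj_I, Complex.conj_ofReal]
    ring_nf
  have hAconj : A (-z) = (starRingEnd ℂ) (A z) := by
    rw [hA, hA, map_div₀]
    simp only [map_mul, map_add, hzc, Complex.conj_I, Complex.conj_ofReal, map_ofNat]
    congr 1 <;> ring
  have hw : A z * p (z + Complex.I) + (starRingEnd ℂ) (A z * p (z + Complex.I)) = 0 := by
    rw [map_mul, ← hAconj, hconj]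
    exact key
  set N : ℂ := (z + Complex.I * (a:ℂ)) * (z + Complex.I * (b:ℂ)) * (z + Complex.I * (c:ℂ)) *
    (z + Complex.I * (d:ℂ)) with hNdef
  set D : ℂ := 2 * z * (2 * z + Complex.I) with hDdef
  have hAzD : A z * D = N := by
    rw [hA, hDdef, hNdef]
    exact div_mul_cancel₀ _ (mul_ne_zero hz20 hzI)
  set W : ℂ := N * p (z + Complex.I) * ((starRingEnd ℂ) D) with hWdef
  have hWre : W.re = 0 := by
    have h1 : W + (starRingEnd ℂ) W
        = (A z * p (z + Complex.I) + (starRingEnd ℂ) (A z * p (z + Complex.I)))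
          * (D * (starRingEnd ℂ) D) := by
      rw [hWdef, ← hAzD]
      simp only [map_mul, Complex.conj_conj]
      ring
    have h2 : ((2 * W.re : ℝ) : ℂ) = 0 := by
      rw [← Complex.add_conj W, h1, hw, zero_mul]
    have h3 := Complex.ofReal_eq_zero.mp h2
    linarith
  -- polar decomposition of W
  have hpfac : p (z + Complex.I)
      = ((∏ j, (Real.sqrt ((x - ξ j) ^ 2 + 1) * Real.sqrt ((x + ξ j) ^ 2 + 1)) : ℝ) : ℂ)
        * Complex.exp (((∑ j, ((π / 2 - arctan (x - ξ j)) + (π / 2 - arctan (x + ξ j))) : ℝ) : ℂ)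
            * Complex.I) := by
    rw [hp, ← prod_polar]
    refine Finset.prod_congr rfl fun j _ => ?_
    have hsplit : (z + Complex.I) ^ 2 - ((ξ j : ℝ) : ℂ) ^ 2
        = (((x - ξ j : ℝ) : ℂ) + Complex.I) * (((x + ξ j : ℝ) : ℂ) + Complex.I) := by
      rw [hz]; push_cast; ring
    rw [hsplit, polar3 (x - ξ j), polar3 (x + ξ j), polar_mul]
  have hNfac : N = ((Real.sqrt (x ^ 2 + a ^ 2) * Real.sqrt (x ^ 2 + b ^ 2) *
        Real.sqrt (x ^ 2 + c ^ 2) * Real.sqrt (x ^ 2 + d ^ 2) : ℝ) : ℂ)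
      * Complex.exp (((arctan (a / x) + arctan (b / x) + arctan (c / x) + arctan (d / x) : ℝ) : ℂ)
          * Complex.I) := by
    rw [hNdef,
      show z + Complex.I * (a:ℂ) = ((x:ℝ):ℂ) + ((a:ℝ):ℂ) * Complex.I by rw [hz]; ring,
      show z + Complex.I * (b:ℂ) = ((x:ℝ):ℂ) + ((b:ℝ):ℂ) * Complex.I by rw [hz]; ring,
      show z + Complex.I * (c:ℂ) = ((x:ℝ):ℂ) + ((c:ℝ):ℂ) * Complex.I by rw [hz]; ring,
      show z + Complex.I * (d:ℂ) = ((x:ℝ):ℂ) + ((d:ℝ):ℂ) * Complex.I by rw [hz]; ring,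
      polar1 x a hx0, polar1 x b hx0, polar1 x c hx0, polar1 x d hx0,
      polar_mul, polar_mul, polar_mul]
  have hDcfac : (starRingEnd ℂ) D
      = ((2 * x * Real.sqrt ((2 * x) ^ 2 + (-1 : ℝ) ^ 2) : ℝ) : ℂ)
        * Complex.exp (((arctan ((-1 : ℝ) / (2 * x)) : ℝ) : ℂ) * Complex.I) := by
    have hDc : (starRingEnd ℂ) D = ((2 * x : ℝ) : ℂ) * (((2 * x : ℝ) : ℂ) + ((-1 : ℝ) : ℂ) * Complex.I) := by
      rw [hDdef, hz]
      simp only [map_mul, map_add, Complex.conj_ofReal, Complex.conj_I, map_ofNat]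
      push_cast
      ring
    rw [hDc, polar1 (2 * x) (-1) (by linarith), ← mul_assoc, ← Complex.ofReal_mul]
  have hWfac : W = (((Real.sqrt (x ^ 2 + a ^ 2) * Real.sqrt (x ^ 2 + b ^ 2) *
        Real.sqrt (x ^ 2 + c ^ 2) * Real.sqrt (x ^ 2 + d ^ 2) *
        (∏ j, (Real.sqrt ((x - ξ j) ^ 2 + 1) * Real.sqrt ((x + ξ j) ^ 2 + 1))) *
        (2 * x * Real.sqrt ((2 * x) ^ 2 + (-1 : ℝ) ^ 2)) : ℝ)) : ℂ)
      * Complex.exp (((arctan (a / x) + arctan (b / x) + arctan (c / x) + arctan (d / x) +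
          (∑ j, ((π / 2 - arctan (x - ξ j)) + (π / 2 - arctan (x + ξ j)))) +
          arctan ((-1 : ℝ) / (2 * x)) : ℝ) : ℂ) * Complex.I) := by
    rw [hWdef, hNfac, hpfac, hDcfac, polar_mul, polar_mul]
  -- R positive
  set R : ℝ := Real.sqrt (x ^ 2 + a ^ 2) * Real.sqrt (x ^ 2 + b ^ 2) *
        Real.sqrt (x ^ 2 + c ^ 2) * Real.sqrt (x ^ 2 + d ^ 2) *
        (∏ j, (Real.sqrt ((x - ξ j) ^ 2 + 1) * Real.sqrt ((x + ξ j) ^ 2 + 1))) *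
        (2 * x * Real.sqrt ((2 * x) ^ 2 + (-1 : ℝ) ^ 2)) with hRdef
  set Θ : ℝ := arctan (a / x) + arctan (b / x) + arctan (c / x) + arctan (d / x) +
          (∑ j, ((π / 2 - arctan (x - ξ j)) + (π / 2 - arctan (x + ξ j)))) +
          arctan ((-1 : ℝ) / (2 * x)) with hΘdef
  have sqrt_pos_of : ∀ u v : ℝ, 0 < v → 0 < Real.sqrt (u ^ 2 + v ^ 2) :=
    fun u v hv => Real.sqrt_pos.2 (by nlinarith)
  have hRpos : 0 < R := by
    rw [hRdef]
    have h1 : 0 < ∏ j, (Real.sqrt ((x - ξ j) ^ 2 + 1) * Real.sqrt ((x + ξ j) ^ 2 + 1)) := by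
      refine Finset.prod_pos fun j _ => mul_pos ?_ ?_ <;>
        exact Real.sqrt_pos.2 (by positivity)
    have h2 : 0 < 2 * x * Real.sqrt ((2 * x) ^ 2 + (-1 : ℝ) ^ 2) := by
      refine mul_pos (by linarith) (Real.sqrt_pos.2 (by positivity))
    exact mul_pos (mul_pos (mul_pos (mul_pos (mul_pos (sqrt_pos_of x a ha)
      (sqrt_pos_of x b hb)) (sqrt_pos_of x c hc)) (sqrt_pos_of x d hd)) h1) h2
  have hcosΘ : Real.cos Θ = 0 := by
    have h1 : W.re = R * Real.cos Θ := by
      rw [hWfac, Complex.exp_mul_I, ← Complex.ofReal_cos, ← Complex.ofReal_sin]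
      simp [Complex.mul_re, Complex.add_re, Complex.ofReal_re, Complex.ofReal_im]
      left
      exact Complex.cos_ofReal_re Θ
    rw [hWre] at h1
    have := h1.symm
    rcases mul_eq_zero.mp this with h | h
    · exact absurd h hRpos.ne'
    · exact h
  obtain ⟨m0, hm0⟩ := Real.cos_eq_zero_iff.mp hcosΘ
  -- now arithmetic
  refine ⟨(n : ℤ) + 1 - m0, ?_⟩
  have e1 : arctan (a / x) = π / 2 - arctan (x / a) := by
    rw [show a / x = (x / a)⁻¹ from (inv_div x a).symm ▸ rfl, Real.arctan_inv_of_pos (div_pos hx0 ha)]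
  have e2 : arctan (b / x) = π / 2 - arctan (x / b) := by
    rw [show b / x = (x / b)⁻¹ from (inv_div x b).symm ▸ rfl, Real.arctan_inv_of_pos (div_pos hx0 hb)]
  have e3 : arctan (c / x) = π / 2 - arctan (x / c) := by
    rw [show c / x = (x / c)⁻¹ from (inv_div x c).symm ▸ rfl, Real.arctan_inv_of_pos (div_pos hx0 hc)]
  have e4 : arctan (d / x) = π / 2 - arctan (x / d) := by
    rw [show d / x = (x / d)⁻¹ from (inv_div x d).symm ▸ rfl, Real.arctan_inv_of_pos (div_pos hx0 hd)]
  have e5 : arctan ((-1 : ℝ) / (2 * x)) = arctan (2 * x) - π / 2 := by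
    rw [show (-1 : ℝ) / (2 * x) = -(2 * x)⁻¹ by ring, Real.arctan_neg,
      Real.arctan_inv_of_pos (by linarith)]
    ring
  have e6 : (∑ j, ((π / 2 - arctan (x - ξ j)) + (π / 2 - arctan (x + ξ j))))
      = (n : ℝ) * π - ∑ j, (arctan (x - ξ j) + arctan (x + ξ j)) := by
    have h : ∀ j : Fin n, (π / 2 - arctan (x - ξ j)) + (π / 2 - arctan (x + ξ j))
        = π - (arctan (x - ξ j) + arctan (x + ξ j)) := fun j => by ring
    rw [Finset.sum_congr rfl fun j _ => h j, Finset.sum_sub_distrib, Finset.sum_const,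
      Finset.card_univ, Fintype.card_fin, nsmul_eq_mul]
  rw [hΘdef, e1, e2, e3, e4, e5, e6] at hm0
  unfold Sfun
  rw [← hx]
  push_cast
  linarith [hm0]
private lemma pair_nonneg {xk xj : ℝ} (hk : 0 < xk) :
    0 ≤ arctan (xk - xj) + arctan (xk + xj) := by
  have h := Real.arctan_strictMono.monotone (show xj - xk ≤ xk + xj by linarith)
  rw [show xj - xk = -(xk - xj) by ring, Real.arctan_neg] at h
  linarith

private lemma pair_le {xk xj : ℝ} (hk : 0 < xk) :
    arctan (xk - xj) + arctan (xk + xj) ≤ 2 * xk := by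
  have h := arctan_sub_le (show xj - xk ≤ xk + xj by linarith)
  rw [show xj - xk = -(xk - xj) by ring, Real.arctan_neg] at h
  linarith

private lemma Sfun_pos {n : ℕ} {ξ : Fin n → ℝ} {a b c d : ℝ}
    (ha : 0 < a) (hb : 0 < b) (hc : 0 < c) (hd : 0 < d)
    (hpos : ∀ j, 0 < ξ j) (k : Fin n) : 0 < Sfun ξ a b c d k := by
  rw [Sfun_erase]
  have h1 : 0 ≤ ∑ j ∈ univ.erase k, (arctan (ξ k - ξ j) + arctan (ξ k + ξ j)) :=
    Finset.sum_nonneg fun j _ => pair_nonneg (hpos k)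
  have g1 := arctan_pos' (div_pos (hpos k) ha)
  have g2 := arctan_pos' (div_pos (hpos k) hb)
  have g3 := arctan_pos' (div_pos (hpos k) hc)
  have g4 := arctan_pos' (div_pos (hpos k) hd)
  linarith

private lemma Sfun_le {n : ℕ} {ξ : Fin n → ℝ} {a b c d km : ℝ} (hn : 1 ≤ n)
    (ha : 0 < a) (hb : 0 < b) (hc : 0 < c) (hd : 0 < d)
    (hpos : ∀ j, 0 < ξ j)
    (hkm : km = 2 * ((n : ℝ) - 1) + a⁻¹ + b⁻¹ + c⁻¹ + d⁻¹) (k : Fin n) :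
    Sfun ξ a b c d k ≤ km * ξ k := by
  rw [Sfun_erase]
  have hcard : (univ.erase k).card = n - 1 := by
    rw [Finset.card_erase_of_mem (Finset.mem_univ k), Finset.card_univ, Fintype.card_fin]
  have h1 : ∑ j ∈ univ.erase k, (arctan (ξ k - ξ j) + arctan (ξ k + ξ j))
      ≤ ((n : ℝ) - 1) * (2 * ξ k) := by
    have h := Finset.sum_le_card_nsmul (univ.erase k)
      (fun j => arctan (ξ k - ξ j) + arctan (ξ k + ξ j)) (2 * ξ k)
      (fun j _ => pair_le (hpos k))
    rw [hcard, nsmul_eq_mul] at h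
    have hcast : ((n - 1 : ℕ) : ℝ) = (n : ℝ) - 1 := by
      rw [Nat.cast_sub hn]; norm_num
    rw [hcast] at h
    exact h
  have g1 : arctan (ξ k / a) ≤ ξ k / a := arctan_le_self' (div_nonneg (hpos k).le ha.le)
  have g2 : arctan (ξ k / b) ≤ ξ k / b := arctan_le_self' (div_nonneg (hpos k).le hb.le)
  have g3 : arctan (ξ k / c) ≤ ξ k / c := arctan_le_self' (div_nonneg (hpos k).le hc.le)
  have g4 : arctan (ξ k / d) ≤ ξ k / d := arctan_le_self' (div_nonneg (hpos k).le hd.le)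
  have hfin : ((n : ℝ) - 1) * (2 * ξ k) + (ξ k / a + ξ k / b + ξ k / c + ξ k / d)
      = km * ξ k := by
    rw [hkm]; field_simp; ring
  linarith

private lemma Sfun_split {n : ℕ} (ξ : Fin n → ℝ) (a b c d : ℝ) (k k' : Fin n) (hne : k' ≠ k) :
    Sfun ξ a b c d k = (arctan (ξ k - ξ k') + arctan (ξ k + ξ k'))
      + ∑ j ∈ (univ.erase k).erase k', (arctan (ξ k - ξ j) + arctan (ξ k + ξ j))
      + (arctan (ξ k / a) + arctan (ξ k / b) + arctan (ξ k / c) + arctan (ξ k / d)) := by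
  rw [Sfun_erase, ← Finset.add_sum_erase _ _ (Finset.mem_erase.mpr ⟨hne, Finset.mem_univ k'⟩)]

private lemma Sfun_sub_le {n : ℕ} {ξ : Fin n → ℝ} {a b c d km : ℝ}
    (ha : 0 < a) (hb : 0 < b) (hc : 0 < c) (hd : 0 < d)
    (hpos : ∀ j, 0 < ξ j)
    (hkm : km = 2 * ((n : ℝ) - 1) + a⁻¹ + b⁻¹ + c⁻¹ + d⁻¹)
    {k k' : Fin n} (hne : k ≠ k') (hlt : ξ k' < ξ k) :
    Sfun ξ a b c d k - Sfun ξ a b c d k' ≤ km * (ξ k - ξ k') := by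
  have hn2 : 2 ≤ n := by
    rcases Nat.lt_or_ge n 2 with h | h
    · exact absurd (Fin.ext (by omega : k.val = k'.val)) hne
    · exact h
  rw [Sfun_split ξ a b c d k k' hne.symm, Sfun_split ξ a b c d k' k hne,
    Finset.erase_right_comm]
  set s := (univ.erase k').erase k with hs
  have hcard : s.card = n - 2 := by
    rw [hs, Finset.card_erase_of_mem (Finset.mem_erase.mpr ⟨hne, Finset.mem_univ _⟩),
      Finset.card_erase_of_mem (Finset.mem_univ _), Finset.card_univ, Fintype.card_fin]
    omega
  have hsum : ∑ j ∈ s, (arctan (ξ k - ξ j) + arctan (ξ k + ξ j))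
      - ∑ j ∈ s, (arctan (ξ k' - ξ j) + arctan (ξ k' + ξ j))
      ≤ ((n : ℝ) - 2) * (2 * (ξ k - ξ k')) := by
    rw [← Finset.sum_sub_distrib]
    have hb' : ∀ j ∈ s, (arctan (ξ k - ξ j) + arctan (ξ k + ξ j))
        - (arctan (ξ k' - ξ j) + arctan (ξ k' + ξ j)) ≤ 2 * (ξ k - ξ k') := by
      intro j _
      have u1 := arctan_sub_le (show ξ k' - ξ j ≤ ξ k - ξ j by linarith)
      have u2 := arctan_sub_le (show ξ k' + ξ j ≤ ξ k + ξ j by linarith)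
      linarith
    have h := Finset.sum_le_card_nsmul s _ _ hb'
    rw [hcard, nsmul_eq_mul, Nat.cast_sub hn2] at h
    push_cast at h
    exact h
  have hcross : (arctan (ξ k - ξ k') + arctan (ξ k + ξ k'))
      - (arctan (ξ k' - ξ k) + arctan (ξ k' + ξ k)) ≤ 2 * (ξ k - ξ k') := by
    rw [show ξ k' - ξ k = -(ξ k - ξ k') by ring, Real.arctan_neg,
      show ξ k' + ξ k = ξ k + ξ k' by ring]
    have := arctan_le_self' (show (0:ℝ) ≤ ξ k - ξ k' by linarith)
    linarith
  have g1 := arctan_sub_le (show ξ k' / a ≤ ξ k / a by gcongr <;> exact hlt.le)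
  have g2 := arctan_sub_le (show ξ k' / b ≤ ξ k / b by gcongr <;> exact hlt.le)
  have g3 := arctan_sub_le (show ξ k' / c ≤ ξ k / c by gcongr <;> exact hlt.le)
  have g4 := arctan_sub_le (show ξ k' / d ≤ ξ k / d by gcongr <;> exact hlt.le)
  have hfin : 2 * (ξ k - ξ k') + ((n : ℝ) - 2) * (2 * (ξ k - ξ k'))
      + ((ξ k / a - ξ k' / a) + (ξ k / b - ξ k' / b) + (ξ k / c - ξ k' / c)
        + (ξ k / d - ξ k' / d)) = km * (ξ k - ξ k') := by
    rw [hkm]; field_simp; ring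
  linarith

private lemma Sfun_lt {n : ℕ} {ξ : Fin n → ℝ} {a b c d : ℝ}
    (ha : 0 < a) (hb : 0 < b) (hc : 0 < c) (hd : 0 < d)
    {k k' : Fin n} (hne : k ≠ k') (hlt : ξ k' < ξ k) :
    Sfun ξ a b c d k' < Sfun ξ a b c d k := by
  rw [Sfun_split ξ a b c d k k' hne.symm, Sfun_split ξ a b c d k' k hne,
    Finset.erase_right_comm]
  set s := (univ.erase k).erase k' with hs
  have hsum : ∑ j ∈ s, (arctan (ξ k' - ξ j) + arctan (ξ k' + ξ j))
      ≤ ∑ j ∈ s, (arctan (ξ k - ξ j) + arctan (ξ k + ξ j)) := by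
    refine Finset.sum_le_sum fun j _ => ?_
    have u1 := Real.arctan_strictMono.monotone (show ξ k' - ξ j ≤ ξ k - ξ j by linarith)
    have u2 := Real.arctan_strictMono.monotone (show ξ k' + ξ j ≤ ξ k + ξ j by linarith)
    linarith
  have hcross : (arctan (ξ k' - ξ k) + arctan (ξ k' + ξ k))
      < (arctan (ξ k - ξ k') + arctan (ξ k + ξ k')) := by
    rw [show ξ k' + ξ k = ξ k + ξ k' by ring]
    have := Real.arctan_strictMono (show ξ k' - ξ k < ξ k - ξ k' by linarith)
    linarith
  have g1 := Real.arctan_strictMono.monotone (show ξ k' / a ≤ ξ k / a by gcongr <;> exact hlt.le)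
  have g2 := Real.arctan_strictMono.monotone (show ξ k' / b ≤ ξ k / b by gcongr <;> exact hlt.le)
  have g3 := Real.arctan_strictMono.monotone (show ξ k' / c ≤ ξ k / c by gcongr <;> exact hlt.le)
  have g4 := Real.arctan_strictMono.monotone (show ξ k' / d ≤ ξ k / d by gcongr <;> exact hlt.le)
  linarith

private lemma int_step {n : ℕ} (m : Fin n → ℤ)
    (hstep : ∀ k k' : Fin n, k < k' → m k' < m k) :
    ∀ (l : ℕ) (k k' : Fin n), k'.val = k.val + l → m k' + l ≤ m k := by
  intro l
  induction l with
  | zero =>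
    intro k k' h
    have hkk : k = k' := Fin.ext (by omega)
    subst hkk
    simp
  | succ l ih =>
    intro k k' h
    have hk'' : k.val + l < n := by have := k'.isLt; omega
    have h1 := ih k ⟨k.val + l, hk''⟩ rfl
    have h2 : m k' < m ⟨k.val + l, hk''⟩ := by
      refine hstep _ _ ?_
      rw [Fin.lt_def]
      simp
      omega
    push_cast at h1 ⊢
    omega
/-- Lower bounds for the zeros of the Wilson polynomial, characterized via the
second-order difference equation it satisfies. -/
theorem wilson_zero_bounds
    (n : ℕ) (hn : 1 ≤ n) (a b c d : ℝ)
    (ha : 0 < a) (hb : 0 < b) (hc : 0 < c) (hd : 0 < d)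
    (ξ : Fin n → ℝ)
    (hpos : ∀ j, 0 < ξ j)
    (hdec : ∀ j j' : Fin n, j < j' → ξ j' < ξ j)
    (p : ℂ → ℂ)
    (hp : ∀ z : ℂ, p z = ∏ j : Fin n, (z ^ 2 - ((ξ j : ℂ)) ^ 2))
    (A : ℂ → ℂ)
    (hA : ∀ z : ℂ, A z =
      ((z + Complex.I * (a : ℂ)) * (z + Complex.I * (b : ℂ)) *
       (z + Complex.I * (c : ℂ)) * (z + Complex.I * (d : ℂ))) /
      (2 * z * (2 * z + Complex.I)))
    (En : ℝ)
    (hEn : En = -(n : ℝ) * ((n : ℝ) + a + b + c + d - 1))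
    (heq : ∀ z : ℂ, 2 * z * (2 * z + Complex.I) ≠ 0 →
      A z * (p (z + Complex.I) - p z) + A (-z) * (p (z - Complex.I) - p z)
        = (En : ℂ) * p z)
    (km : ℝ)
    (hkm : km = 2 * ((n : ℝ) - 1) + a⁻¹ + b⁻¹ + c⁻¹ + d⁻¹) :
    (∀ j : Fin n, π * ((n : ℝ) - j.val) / km ≤ ξ j) ∧
    (∀ j j' : Fin n, j < j' → π * ((j'.val : ℝ) - j.val) / km ≤ ξ j - ξ j') := by
  have hπ := Real.pi_pos
  have hkm0 : 0 < km := by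
    rw [hkm]
    have h1 : (1 : ℝ) ≤ (n : ℝ) := by exact_mod_cast hn
    have := inv_pos.2 ha
    have := inv_pos.2 hb
    have := inv_pos.2 hc
    have := inv_pos.2 hd
    linarith
  choose m hm using fun k => Sfun_int ξ a b c d ha hb hc hd hpos p hp A hA En heq k
  have h1 : ∀ k, 1 ≤ m k := by
    intro k
    have h := Sfun_pos ha hb hc hd hpos k
    rw [hm k] at h
    by_contra hx
    push_neg at hx
    have hx' : (m k : ℝ) ≤ 0 := by
      have : m k ≤ 0 := by omega
      exact_mod_cast this
    nlinarith
  have hstep : ∀ k k' : Fin n, k < k' → m k' < m k := by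
    intro k k' hkk
    have hlt := hdec k k' hkk
    have h := Sfun_lt ha hb hc hd (Fin.ne_of_lt hkk) hlt
    rw [hm k, hm k'] at h
    exact_mod_cast (mul_lt_mul_iff_left₀ hπ).mp h
  have hgap : ∀ k k' : Fin n, k ≤ k' → m k' + ((k'.val : ℤ) - k.val) ≤ m k := by
    intro k k' hkk
    have h := int_step m hstep (k'.val - k.val) k k' (by omega)
    have : ((k'.val - k.val : ℕ) : ℤ) = (k'.val : ℤ) - k.val := by
      have := hkk
      rw [Fin.le_def] at this
      omega
    omega
  have hmk : ∀ k : Fin n, (n : ℤ) - k.val ≤ m k := by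
    intro k
    have hlt : n - 1 < n := by omega
    have hle : k ≤ (⟨n - 1, hlt⟩ : Fin n) := by
      rw [Fin.le_def]
      have := k.isLt
      simp
      omega
    have hg := hgap k ⟨n - 1, hlt⟩ hle
    have hl := h1 ⟨n - 1, hlt⟩
    simp at hg
    omega
  constructor
  · intro k
    have hS := Sfun_le hn ha hb hc hd hpos hkm k
    rw [hm k] at hS
    have h2 : ((n : ℝ) - k.val) ≤ (m k : ℝ) := by exact_mod_cast hmk k
    rw [div_le_iff₀ hkm0]
    nlinarith
  · intro k k' hkk
    have hS := Sfun_sub_le ha hb hc hd hpos hkm (Fin.ne_of_lt hkk) (hdec k k' hkk)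
    rw [hm k, hm k'] at hS
    have hg := hgap k k' hkk.le
    have h2 : ((k'.val : ℝ) - k.val) ≤ (m k : ℝ) - m k' := by
      have : ((k'.val : ℤ) - k.val) ≤ m k - m k' := by omega
      exact_mod_cast this
    rw [div_le_iff₀ hkm0]
    nlinarith
end

section
/- Let n ≥ 1 and let a, b > 0. Suppose ξ_1 > ξ_2 > … > ξ_n are real numbers such that, with p : ℂ → ℂ defined by p(ξ) = ∏_{j=1}^n (ξ − ξ_j), the difference equation A(ξ)·(p(ξ+i) − p(ξ)) + A(−ξ)·(p(ξ−i) − p(ξ)) = E_n · p(ξ) holds for every ξ ∈ ℂ, where A(ξ) = (ξ+ia)(ξ+ib) and E_n = −n(n+2a+2b−1). Then for all 1 ≤ j < j′ ≤ n one has ξ_j − ξ_{j′} ≥ π(j′−j)/k₋, where k₋ = n + a^{−1} + b^{−1}. -/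
open Real Finset

lemma arctan_lip (x y : ℝ) : |Real.arctan x - Real.arctan y| ≤ |x - y| := by
  have h := Convex.norm_image_sub_le_of_norm_deriv_le (f := Real.arctan) (C := 1)
    (s := Set.univ) (fun z _ => Real.differentiableAt_arctan z)
    (fun z _ => by
      rw [Real.deriv_arctan]
      rw [Real.norm_eq_abs, abs_of_nonneg (by positivity)]
      rw [div_le_one (by positivity)]
      nlinarith [sq_nonneg z])
    convex_univ (Set.mem_univ y) (Set.mem_univ x)
  simpa [Real.norm_eq_abs] using h

lemma polar (c x : ℝ) (hc : 0 < c) :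
    (x : ℂ) + Complex.I * c
      = (Real.sqrt (x ^ 2 + c ^ 2) : ℝ) *
        Complex.exp (((π / 2 - Real.arctan (x / c) : ℝ) : ℂ) * Complex.I) := by
  have hs : (0 : ℝ) < Real.sqrt (1 + (x / c) ^ 2) := Real.sqrt_pos.2 (by positivity)
  have hr : Real.sqrt (x ^ 2 + c ^ 2) = c * Real.sqrt (1 + (x / c) ^ 2) := by
    rw [show x ^ 2 + c ^ 2 = c ^ 2 * (1 + (x / c) ^ 2) by field_simp; ring,
      Real.sqrt_mul (sq_nonneg c), Real.sqrt_sq hc.le]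
  rw [Complex.exp_mul_I, hr]
  rw [show Complex.cos ((π / 2 - Real.arctan (x / c) : ℝ) : ℂ)
      = ((Real.cos (π / 2 - Real.arctan (x / c)) : ℝ) : ℂ) by
        rw [Complex.ofReal_cos],
    show Complex.sin ((π / 2 - Real.arctan (x / c) : ℝ) : ℂ)
      = ((Real.sin (π / 2 - Real.arctan (x / c)) : ℝ) : ℂ) by
        rw [Complex.ofReal_sin]]
  rw [Real.cos_pi_div_two_sub, Real.sin_pi_div_two_sub, Real.sin_arctan, Real.cos_arctan]
  have h1 : (c * Real.sqrt (1 + (x / c) ^ 2)) * (x / c / Real.sqrt (1 + (x / c) ^ 2)) = x := by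
    field_simp
  have h2 : (c * Real.sqrt (1 + (x / c) ^ 2)) * (1 / Real.sqrt (1 + (x / c) ^ 2)) = c := by
    field_simp
  calc (x : ℂ) + Complex.I * c
      = (((c * Real.sqrt (1 + (x / c) ^ 2)) * (x / c / Real.sqrt (1 + (x / c) ^ 2)) : ℝ) : ℂ)
        + Complex.I * (((c * Real.sqrt (1 + (x / c) ^ 2)) * (1 / Real.sqrt (1 + (x / c) ^ 2)) : ℝ) : ℂ) := by
        rw [h1, h2]
    _ = _ := by push_cast; ring

noncomputable def thetaF (n : ℕ) (ξ : Fin n → ℝ) (a b x : ℝ) : ℝ :=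
  (π / 2 - Real.arctan (x / a)) + (π / 2 - Real.arctan (x / b))
    + ∑ j : Fin n, (π / 2 - Real.arctan (x - ξ j))

noncomputable def RF (n : ℕ) (ξ : Fin n → ℝ) (a b x : ℝ) : ℝ :=
  Real.sqrt (x ^ 2 + a ^ 2) * Real.sqrt (x ^ 2 + b ^ 2)
    * ∏ j : Fin n, Real.sqrt ((x - ξ j) ^ 2 + 1 ^ 2)

lemma prod_polar_s2 (n : ℕ) (ξ : Fin n → ℝ) (a b : ℝ) (ha : 0 < a) (hb : 0 < b) (x : ℝ) :
    ((x : ℂ) + Complex.I * a) * ((x : ℂ) + Complex.I * b)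
      * ∏ j : Fin n, ((x : ℂ) + Complex.I - (ξ j : ℂ))
    = ((RF n ξ a b x : ℝ) : ℂ) * Complex.exp (((thetaF n ξ a b x : ℝ) : ℂ) * Complex.I) := by
  have e3 : ∀ j : Fin n, ((x : ℂ) + Complex.I - (ξ j : ℂ))
      = ((Real.sqrt ((x - ξ j) ^ 2 + 1 ^ 2) : ℝ) : ℂ) *
        Complex.exp (((π / 2 - Real.arctan (x - ξ j) : ℝ) : ℂ) * Complex.I) := by
    intro j
    have h := polar 1 (x - ξ j) one_pos
    rw [div_one] at h
    rw [show (x : ℂ) + Complex.I - (ξ j : ℂ) = ((x - ξ j : ℝ) : ℂ) + Complex.I * ((1 : ℝ) : ℂ) by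
      push_cast; ring]
    exact h
  rw [polar a x ha, polar b x hb, Finset.prod_congr rfl (fun j _ => e3 j),
    Finset.prod_mul_distrib]
  unfold RF thetaF
  push_cast
  rw [add_mul, add_mul, Complex.exp_add, Complex.exp_add, Finset.sum_mul, Complex.exp_sum]
  ring

/-- Lower bounds for the gaps between the zeros of the symmetric continuous Hahn
polynomial, characterized via the second-order difference equation it satisfies. -/
theorem continuous_hahn_gap_bounds
    (n : ℕ) (hn : 1 ≤ n) (a b : ℝ) (ha : 0 < a) (hb : 0 < b)
    (ξ : Fin n → ℝ)
    (hdec : ∀ j j' : Fin n, j < j' → ξ j' < ξ j)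
    (p : ℂ → ℂ)
    (hp : ∀ z : ℂ, p z = ∏ j : Fin n, (z - (ξ j : ℂ)))
    (A : ℂ → ℂ)
    (hA : ∀ z : ℂ, A z = (z + Complex.I * (a : ℂ)) * (z + Complex.I * (b : ℂ)))
    (En : ℝ)
    (hEn : En = -(n : ℝ) * ((n : ℝ) + 2 * a + 2 * b - 1))
    (heq : ∀ z : ℂ,
      A z * (p (z + Complex.I) - p z) + A (-z) * (p (z - Complex.I) - p z)
        = (En : ℂ) * p z)
    (km : ℝ)
    (hkm : km = (n : ℝ) + a⁻¹ + b⁻¹) :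
    ∀ j j' : Fin n, j < j' → π * ((j'.val : ℝ) - j.val) / km ≤ ξ j - ξ j' := by
  have hRpos : ∀ x : ℝ, 0 < RF n ξ a b x := by
    intro x
    unfold RF
    apply mul_pos (mul_pos (Real.sqrt_pos.2 (by positivity)) (Real.sqrt_pos.2 (by positivity)))
    exact Finset.prod_pos fun j _ => Real.sqrt_pos.2 (by positivity)
  have key : ∀ x : ℝ, A (x : ℂ) * p ((x : ℂ) + Complex.I)
      = ((RF n ξ a b x : ℝ) : ℂ) * Complex.exp (((thetaF n ξ a b x : ℝ) : ℂ) * Complex.I) := by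
    intro x
    rw [hA, hp, ← prod_polar_s2 n ξ a b ha hb x]
  -- cos (theta) = 0 at each zero
  have hcos : ∀ k : Fin n, Real.cos (thetaF n ξ a b (ξ k)) = 0 := by
    intro k
    have hz : p ((ξ k : ℝ) : ℂ) = 0 := by
      rw [hp]; exact Finset.prod_eq_zero (Finset.mem_univ k) (by simp)
    have h0 := heq ((ξ k : ℝ) : ℂ)
    rw [hz] at h0
    simp only [mul_zero, sub_zero] at h0
    have hconjA : A (-((ξ k : ℝ) : ℂ)) = (starRingEnd ℂ) (A ((ξ k : ℝ) : ℂ)) := by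
      rw [hA, hA]
      simp only [map_mul, map_add, Complex.conj_ofReal, Complex.conj_I, map_neg]
      ring
    have hconjp : p (((ξ k : ℝ) : ℂ) - Complex.I)
        = (starRingEnd ℂ) (p (((ξ k : ℝ) : ℂ) + Complex.I)) := by
      rw [hp, hp, map_prod]
      refine Finset.prod_congr rfl fun j _ => ?_
      simp only [map_sub, map_add, Complex.conj_ofReal, Complex.conj_I]
      ring
    rw [hconjA, hconjp, ← map_mul, Complex.add_conj] at h0
    have hre : (A ((ξ k : ℝ) : ℂ) * p (((ξ k : ℝ) : ℂ) + Complex.I)).re = 0 := by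
      have h2 : 2 * (A ((ξ k : ℝ) : ℂ) * p (((ξ k : ℝ) : ℂ) + Complex.I)).re = 0 := by
        exact_mod_cast h0
      linarith
    rw [key (ξ k)] at hre
    have h3 : RF n ξ a b (ξ k) * Real.cos (thetaF n ξ a b (ξ k)) = 0 := by
      simpa [Complex.mul_re, Complex.exp_ofReal_mul_I_re] using hre
    rcases mul_eq_zero.1 h3 with h | h
    · exact absurd h (hRpos (ξ k)).ne'
    · exact h
  have hm : ∀ k : Fin n, ∃ mk : ℤ, thetaF n ξ a b (ξ k) = (2 * mk + 1) * π / 2 := fun k =>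
    Real.cos_eq_zero_iff.1 (hcos k)
  choose m hmθ using hm
  -- strict antitonicity
  have hanti : ∀ x y : ℝ, x < y → thetaF n ξ a b y < thetaF n ξ a b x := by
    intro x y hxy
    have hnem : Nonempty (Fin n) := Fin.pos_iff_nonempty.1 hn
    unfold thetaF
    apply add_lt_add
    apply add_lt_add
    · exact sub_lt_sub_left (Real.arctan_strictMono (by gcongr)) _
    · exact sub_lt_sub_left (Real.arctan_strictMono (by gcongr)) _
    · exact Finset.sum_lt_sum_of_nonempty Finset.univ_nonempty fun j _ =>
        sub_lt_sub_left (Real.arctan_strictMono (by gcongr)) _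
  -- Lipschitz bound
  have hlip : ∀ x y : ℝ, x ≤ y →
      thetaF n ξ a b x - thetaF n ξ a b y ≤ km * (y - x) := by
    intro x y hxy
    have hab : ∀ c : ℝ, 0 < c →
        Real.arctan (y / c) - Real.arctan (x / c) ≤ c⁻¹ * (y - x) := by
      intro c hc
      have h1 := arctan_lip (y / c) (x / c)
      have h2 : |y / c - x / c| = c⁻¹ * (y - x) := by
        rw [abs_of_nonneg (sub_nonneg.2 (by gcongr : x / c ≤ y / c)),
          inv_mul_eq_div, sub_div]
      calc Real.arctan (y / c) - Real.arctan (x / c)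
          ≤ |Real.arctan (y / c) - Real.arctan (x / c)| := le_abs_self _
        _ ≤ |y / c - x / c| := h1
        _ = c⁻¹ * (y - x) := h2
    have hj : ∀ j : Fin n, Real.arctan (y - ξ j) - Real.arctan (x - ξ j) ≤ y - x := by
      intro j
      calc Real.arctan (y - ξ j) - Real.arctan (x - ξ j)
          ≤ |Real.arctan (y - ξ j) - Real.arctan (x - ξ j)| := le_abs_self _
        _ ≤ |y - ξ j - (x - ξ j)| := arctan_lip _ _
        _ = y - x := by rw [show y - ξ j - (x - ξ j) = y - x by ring,
            abs_of_nonneg (sub_nonneg.2 hxy)]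
    have hsum : (∑ j : Fin n, (π / 2 - Real.arctan (x - ξ j)))
        - (∑ j : Fin n, (π / 2 - Real.arctan (y - ξ j))) ≤ (n : ℝ) * (y - x) := by
      rw [← Finset.sum_sub_distrib]
      calc ∑ j : Fin n, ((π / 2 - Real.arctan (x - ξ j)) - (π / 2 - Real.arctan (y - ξ j)))
          = ∑ j : Fin n, (Real.arctan (y - ξ j) - Real.arctan (x - ξ j)) :=
            Finset.sum_congr rfl fun j _ => by ring
        _ ≤ ∑ _j : Fin n, (y - x) := Finset.sum_le_sum fun j _ => hj j
        _ = (n : ℝ) * (y - x) := by simp [Finset.sum_const, mul_comm]; ring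
    unfold thetaF
    rw [hkm]
    linarith [hab a ha, hab b hb, hsum]
  -- integer step
  have hstep : ∀ j j' : Fin n, j < j' → m j < m j' := by
    intro j j' hjj
    have hθ : thetaF n ξ a b (ξ j) < thetaF n ξ a b (ξ j') := hanti _ _ (hdec j j' hjj)
    rw [hmθ j, hmθ j'] at hθ
    by_contra h'
    push_neg at h'
    have hle : (m j' : ℝ) ≤ (m j : ℝ) := by exact_mod_cast h'
    have : (2 * (m j' : ℝ) + 1) * π / 2 ≤ (2 * (m j : ℝ) + 1) * π / 2 := by
      gcongr
    linarith
  -- chain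
  have hchain : ∀ d : ℕ, ∀ j j' : Fin n, j.val + d = j'.val → 1 ≤ d →
      (m j : ℤ) + d ≤ m j' := by
    intro d
    induction d with
    | zero => intro j j' _ h1; omega
    | succ d ih =>
      intro j j' hval _
      by_cases hd : d = 0
      · subst hd
        have hlt : j < j' := by rw [Fin.lt_def]; omega
        have := hstep j j' hlt
        push_cast
        omega
      · have hdn : j.val + d < n := by omega
        have h1 : (m j : ℤ) + d ≤ m ⟨j.val + d, hdn⟩ := ih j ⟨j.val + d, hdn⟩ rfl (by omega)
        have h2 : m ⟨j.val + d, hdn⟩ < m j' := hstep ⟨j.val + d, hdn⟩ j'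
          (by rw [Fin.lt_def]; simp; omega)
        push_cast
        omega
  -- finish
  intro j j' hjj
  have hkm0 : 0 < km := by
    rw [hkm]
    have h1 : (1 : ℝ) ≤ (n : ℝ) := by exact_mod_cast hn
    positivity
  have hval : j.val < j'.val := hjj
  set d : ℕ := j'.val - j.val with hd
  have hd1 : 1 ≤ d := by omega
  have hjd : j.val + d = j'.val := by omega
  have hmm : (m j : ℤ) + d ≤ m j' := hchain d j j' hjd hd1
  have hlow : (d : ℝ) * π ≤ thetaF n ξ a b (ξ j') - thetaF n ξ a b (ξ j) := by
    rw [hmθ j, hmθ j']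
    have hdr : (d : ℝ) ≤ (m j' : ℝ) - m j := by
      have : (d : ℤ) ≤ m j' - m j := by omega
      exact_mod_cast this
    nlinarith [Real.pi_pos]
  have hup : thetaF n ξ a b (ξ j') - thetaF n ξ a b (ξ j) ≤ km * (ξ j - ξ j') :=
    hlip (ξ j') (ξ j) (hdec j j' hjj).le
  have hfin : (d : ℝ) * π ≤ km * (ξ j - ξ j') := le_trans hlow hup
  rw [div_le_iff₀ hkm0]
  have hcast : ((j'.val : ℝ)) - j.val = (d : ℝ) := by
    rw [hd, Nat.cast_sub hval.le]
  rw [hcast]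
  linarith [hfin]
end
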